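/- arXiv:dg-ga/9603009 — 4 statements merged into one kernel-verified Lean document; each statement's English description precedes it below -/
import Mathlib

section
/- Let 𝓛 be an even mixed form of codegree k and additional degree r on an open set U ⊆ ℝⁿ, and let Δ𝓛 be its differential, Δ𝓛(x, p, ŵ) := (−1)^r Σ_{K=1}^{k} Σ_{A=1}^{n} w'^K (∂²𝓛/∂x^A∂p_A^K)(x, p, w), where ŵ ∈ Matrix((r+1)×k, ℝ) has first r rows w and last row w'. Then Δ𝓛 is left-covariant: Δ𝓛(x, p, ĥ·ŵ) = det ĥ · Δ𝓛(x, p, ŵ) for all x, p, ŵ and all invertible ĥ ∈ Matrix((r+1)×(r+1), ℝ). -/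
open MeasureTheory
open scoped BigOperators

noncomputable section

/-- Product of matrices given as functions (entry `(i,k)` is `∑ j, M i j * N j k`). -/
def mmul {a b c : ℕ} (M : Fin a → Fin b → ℝ) (N : Fin b → Fin c → ℝ) :
    Fin a → Fin c → ℝ :=
  fun i k => ∑ j, M i j * N j k

/-- Determinant of a square matrix given as a function. -/
def fdet {a : ℕ} (M : Fin a → Fin a → ℝ) : ℝ :=
  Matrix.det (Matrix.of M)

/-- Partial derivative of a function of a matrix with respect to the `(i,j)` entry. -/
def pdM {a b : ℕ} (L : (Fin a → Fin b → ℝ) → ℝ) (i : Fin a) (j : Fin b)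
    (m : Fin a → Fin b → ℝ) : ℝ :=
  deriv (fun t : ℝ => L (fun i' j' => m i' j' + (if i' = i ∧ j' = j then t else 0))) 0

/-- Partial derivative of a function of a vector with respect to the `i`-th coordinate. -/
def pdV {a : ℕ} (f : (Fin a → ℝ) → ℝ) (i : Fin a) (x : Fin a → ℝ) : ℝ :=
  deriv (fun t : ℝ => f (fun i' => x i' + (if i' = i then t else 0))) 0

/-- The fundamental equations for a function of an `a × b` matrix:
for all rows `i₁, i₂` and columns `j₁, j₂`,
`∂²L/∂m_{i₁}^{j₁}∂m_{i₂}^{j₂} + ∂²L/∂m_{i₂}^{j₁}∂m_{i₁}^{j₂} = 0`. -/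
def FundEqs {a b : ℕ} (L : (Fin a → Fin b → ℝ) → ℝ) : Prop :=
  ∀ (i₁ i₂ : Fin a) (j₁ j₂ : Fin b) (m : Fin a → Fin b → ℝ),
    pdM (fun m' => pdM L i₂ j₂ m') i₁ j₁ m + pdM (fun m' => pdM L i₁ j₂ m') i₂ j₁ m = 0

/-- The velocity matrix of a path `γ`: `(vel γ t) F A = ∂γ^A/∂t^F (t)`. -/
def vel {r n : ℕ} (γ : (Fin r → ℝ) → (Fin n → ℝ)) (t : Fin r → ℝ) :
    Fin r → Fin n → ℝ :=
  fun F A => pdV (fun s => γ s A) F t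

/-- The matrix of gradients of a copath `f`: `(grad f x) A K = ∂f^K/∂x^A (x)`. -/
def grad {n k : ℕ} (f : (Fin n → ℝ) → (Fin k → ℝ)) (x : Fin n → ℝ) :
    Fin n → Fin k → ℝ :=
  fun A K => pdV (fun y => f y K) A x

/-- An even `r`-form on an open set `U ⊆ ℝⁿ`: a smooth function `L(x, ẋ)` of a point
`x` and an `r × n` matrix `ẋ` which is covariant (`L(x, h·ẋ) = det h · L(x, ẋ)` for
invertible `h`) and satisfies the fundamental equations in the entries of `ẋ`. -/
def IsEvenForm {n r : ℕ} (U : Set (Fin n → ℝ))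
    (L : (Fin n → ℝ) → (Fin r → Fin n → ℝ) → ℝ) : Prop :=
  ContDiffOn ℝ (⊤ : ℕ∞)
      (fun q : (Fin n → ℝ) × (Fin r → Fin n → ℝ) => L q.1 q.2)
      (U ×ˢ (Set.univ : Set (Fin r → Fin n → ℝ))) ∧
  (∀ x ∈ U, ∀ (xdot : Fin r → Fin n → ℝ) (h : Fin r → Fin r → ℝ), fdet h ≠ 0 →
    L x (mmul h xdot) = fdet h * L x xdot) ∧
  (∀ x ∈ U, FundEqs (L x))

/-- The differential of a Lagrangian of paths `L(x, ẋ)`: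
`ΔL(x, (ẋ; ẏ)) = (−1)^r Σ_A ẏ^A (∂L/∂x^A − Σ_{F,B} ẋ_F^B ∂²L/∂x^B∂ẋ_F^A)`,
where `ẋ` consists of the first `r` rows and `ẏ` is the last row of the argument. -/
def Dform {n r : ℕ} (L : (Fin n → ℝ) → (Fin r → Fin n → ℝ) → ℝ) :
    (Fin n → ℝ) → (Fin (r + 1) → Fin n → ℝ) → ℝ :=
  fun x M => (-1 : ℝ) ^ r * ∑ A, M (Fin.last r) A *
    (pdV (fun x' => L x' (fun F => M (Fin.castSucc F))) A x
      - ∑ F, ∑ B, M (Fin.castSucc F) B *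
          pdV (fun x' => pdM (L x') F A (fun G => M (Fin.castSucc G))) B x)

/-- An even mixed form of codegree `k` and additional degree `r` on an open set
`U ⊆ ℝⁿ`: a smooth function `𝓛(x, p, w)` which is right-covariant, left-covariant,
admissible, and satisfies the fundamental equations in the entries of the stacked
`(n+r) × k` matrix (`p` over `w`). -/
def IsMixedForm {n k r : ℕ} (U : Set (Fin n → ℝ))
    (L : (Fin n → ℝ) → (Fin n → Fin k → ℝ) → (Fin r → Fin k → ℝ) → ℝ) : Prop :=
  ContDiffOn ℝ (⊤ : ℕ∞)
      (fun q : (Fin n → ℝ) × (Fin n → Fin k → ℝ) × (Fin r → Fin k → ℝ) =>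
        L q.1 q.2.1 q.2.2)
      (U ×ˢ (Set.univ : Set ((Fin n → Fin k → ℝ) × (Fin r → Fin k → ℝ)))) ∧
  (∀ x ∈ U, ∀ (p : Fin n → Fin k → ℝ) (w : Fin r → Fin k → ℝ) (g : Fin k → Fin k → ℝ),
    fdet g ≠ 0 → L x (mmul p g) (mmul w g) = fdet g * L x p w) ∧
  (∀ x ∈ U, ∀ (p : Fin n → Fin k → ℝ) (w : Fin r → Fin k → ℝ) (h : Fin r → Fin r → ℝ),
    fdet h ≠ 0 → L x p (mmul h w) = fdet h * L x p w) ∧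
  (∀ x ∈ U, ∀ (p : Fin n → Fin k → ℝ) (w : Fin r → Fin k → ℝ) (a : Fin n → Fin r → ℝ),
    L x (p + mmul a w) w = L x p w) ∧
  (∀ x ∈ U, FundEqs (fun m : Fin (n + r) → Fin k → ℝ =>
    L x (fun A => m (Fin.castAdd r A)) (fun F => m (Fin.natAdd n F))))

/-- The differential of a mixed Lagrangian `𝓛(x, p, w)`:
`Δ𝓛(x, p, ŵ) = (−1)^r Σ_{K,A} w'^K ∂²𝓛/∂x^A∂p_A^K (x, p, w)`, where `ŵ` has first
`r` rows `w` and last row `w'`. -/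
def Dmix {n k r : ℕ}
    (L : (Fin n → ℝ) → (Fin n → Fin k → ℝ) → (Fin r → Fin k → ℝ) → ℝ) :
    (Fin n → ℝ) → (Fin n → Fin k → ℝ) → (Fin (r + 1) → Fin k → ℝ) → ℝ :=
  fun x p what => (-1 : ℝ) ^ r * ∑ K, ∑ A, what (Fin.last r) K *
    pdV (fun x' => pdM (fun p' => L x' p' (fun F => what (Fin.castSucc F))) A K p) A x

/-- An even dual form of codegree `k` on an open set `U ⊆ ℝⁿ`: a smooth function
`𝓛(x, p)` of a point `x` and an `n × k` matrix `p` of momenta which is covariant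
(`𝓛(x, p·g) = det g · 𝓛(x, p)` for invertible `g`) and satisfies the fundamental
equations in the entries of `p`. -/
def IsDualForm {n k : ℕ} (U : Set (Fin n → ℝ))
    (L : (Fin n → ℝ) → (Fin n → Fin k → ℝ) → ℝ) : Prop :=
  ContDiffOn ℝ (⊤ : ℕ∞)
      (fun q : (Fin n → ℝ) × (Fin n → Fin k → ℝ) => L q.1 q.2)
      (U ×ˢ (Set.univ : Set (Fin n → Fin k → ℝ))) ∧
  (∀ x ∈ U, ∀ (p : Fin n → Fin k → ℝ) (g : Fin k → Fin k → ℝ), fdet g ≠ 0 →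
    L x (mmul p g) = fdet g * L x p) ∧
  (∀ x ∈ U, FundEqs (L x))

/-- The identity matrix as a function. -/
def idm (n : ℕ) : Fin n → Fin n → ℝ := fun i j => if i = j then 1 else 0


/-! ### Auxiliary development for statement_13 -/

namespace Stmt13

open Topology Filter

variable {E F : Type*} [NormedAddCommGroup E] [NormedSpace ℝ E]
  [NormedAddCommGroup F] [NormedSpace ℝ F]

lemma hasDerivAt_line (y v : E) (t : ℝ) : HasDerivAt (fun s : ℝ => y + s • v) v t := by
  simpa using ((hasDerivAt_id t).smul_const v).const_add y

lemma deriv_line {f : E → F} {y : E} (v : E) (t : ℝ)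
    (hf : DifferentiableAt ℝ f (y + t • v)) :
    deriv (fun s : ℝ => f (y + s • v)) t = fderiv ℝ f (y + t • v) v := by
  have := (hf.hasFDerivAt.comp_hasDerivAt t (hasDerivAt_line y v t))
  simpa [Function.comp_def] using this.deriv

lemma deriv_line₀ {f : E → F} {y : E} (v : E)
    (hf : DifferentiableAt ℝ f y) :
    deriv (fun s : ℝ => f (y + s • v)) 0 = fderiv ℝ f y v := by
  have h : DifferentiableAt ℝ f (y + (0:ℝ) • v) := by simpa using hf
  simpa using deriv_line v 0 h

lemma deriv_line_clm {G : E → (E →L[ℝ] F)} {y : E} (u b : E) (t : ℝ)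
    (hG : DifferentiableAt ℝ G (y + t • u)) :
    deriv (fun s : ℝ => G (y + s • u) b) t = fderiv ℝ G (y + t • u) u b := by
  have h := deriv_line (f := fun y' => G y' b) u t (hG.clm_apply (differentiableAt_const b))
  rw [h, fderiv_clm_apply hG (differentiableAt_const b)]
  simp

lemma deriv_line_clm₀ {G : E → (E →L[ℝ] F)} {y : E} (u b : E)
    (hG : DifferentiableAt ℝ G y) :
    deriv (fun s : ℝ => G (y + s • u) b) 0 = fderiv ℝ G y u b := by
  have h : DifferentiableAt ℝ G (y + (0:ℝ) • u) := by simpa using hG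
  have := deriv_line_clm u b 0 h
  simpa using this

lemma deriv_line_clm₂ {G : E → (E →L[ℝ] (E →L[ℝ] F))} {y : E} (u a b : E) (t : ℝ)
    (hG : DifferentiableAt ℝ G (y + t • u)) :
    deriv (fun s : ℝ => G (y + s • u) a b) t = fderiv ℝ G (y + t • u) u a b := by
  have h := deriv_line_clm (G := fun y' => G y' a) u b t
    (hG.clm_apply (differentiableAt_const a))
  rw [h, fderiv_clm_apply hG (differentiableAt_const a)]
  simp

/-- Basis vector. -/
def bV {a : ℕ} (i : Fin a) : Fin a → ℝ := Pi.single i 1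

/-- Basis matrix. -/
def bM {a b : ℕ} (i : Fin a) (j : Fin b) : Fin a → Fin b → ℝ :=
  fun i' j' => if i' = i ∧ j' = j then 1 else 0

lemma pdV_eq_deriv_line {a : ℕ} (f : (Fin a → ℝ) → ℝ) (i : Fin a) (x : Fin a → ℝ) :
    pdV f i x = deriv (fun t : ℝ => f (x + t • bV i)) 0 := by
  unfold pdV
  congr 1
  funext t
  congr 1
  funext i'
  simp [bV, Pi.single_apply, mul_ite]

lemma pdM_eq_deriv_line {a b : ℕ} (L : (Fin a → Fin b → ℝ) → ℝ) (i : Fin a) (j : Fin b)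
    (m : Fin a → Fin b → ℝ) :
    pdM L i j m = deriv (fun t : ℝ => L (m + t • bM i j)) 0 := by
  unfold pdM
  congr 1
  funext t
  congr 1
  funext i' j'
  by_cases h1 : i' = i <;> by_cases h2 : j' = j <;> simp [bM, h1, h2]

section Main

variable {n k r : ℕ}

/-- The full space of variables. -/
abbrev EE (n k r : ℕ) := (Fin n → ℝ) × (Fin n → Fin k → ℝ) × (Fin r → Fin k → ℝ)

/-- A matrix with one row `v` at position `A` and zeros elsewhere. -/
def rowM {a b : ℕ} (A : Fin a) (v : Fin b → ℝ) : Fin a → Fin b → ℝ :=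
  fun B M => if B = A then v M else 0

lemma rowM_single {a b : ℕ} (A : Fin a) (K : Fin b) : rowM A (Pi.single K 1) = bM A K := by
  funext i' j'
  by_cases h1 : i' = A <;> by_cases h2 : j' = K <;>
    simp [rowM, bM, Pi.single_apply, h1, h2]

lemma rowM_add {a b : ℕ} (A : Fin a) (v v' : Fin b → ℝ) :
    rowM A (v + v') = rowM A v + rowM A v' := by
  funext B M; by_cases h : B = A <;> simp [rowM, h]

lemma rowM_smul {a b : ℕ} (A : Fin a) (c : ℝ) (v : Fin b → ℝ) :
    rowM A (c • v) = c • rowM A v := by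
  funext B M; by_cases h : B = A <;> simp [rowM, h]

lemma rowM_eq_sum {a b : ℕ} (A : Fin a) (v : Fin b → ℝ) :
    rowM A v = ∑ K, v K • rowM A (Pi.single K 1) := by
  funext B M
  by_cases h : B = A <;>
    simp [rowM, h, Finset.sum_apply, Pi.single_apply, mul_ite]

variable (L : (Fin n → ℝ) → (Fin n → Fin k → ℝ) → (Fin r → Fin k → ℝ) → ℝ)

/-- `L` as a function on the product space. -/
def Phi : EE n k r → ℝ := fun q => L q.1 q.2.1 q.2.2

def eX (A : Fin n) : EE n k r := (bV A, 0, 0)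
def ePRow (A : Fin n) (v : Fin k → ℝ) : EE n k r := (0, rowM A v, 0)
def eP (A : Fin n) (K : Fin k) : EE n k r := ePRow A (Pi.single K 1)
def eW (F' : Fin r) (v : Fin k → ℝ) : EE n k r := (0, 0, rowM F' v)
def eWc (F' : Fin r) (K : Fin k) : EE n k r := eW F' (Pi.single K 1)

lemma add_smul_eX (x : Fin n → ℝ) (p : Fin n → Fin k → ℝ) (w : Fin r → Fin k → ℝ)
    (t : ℝ) (A : Fin n) :
    ((x, p, w) : EE n k r) + t • eX (k := k) (r := r) A = (x + t • bV A, p, w) := by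
  simp [eX, Prod.ext_iff]

lemma add_smul_ePRow (x : Fin n → ℝ) (p : Fin n → Fin k → ℝ) (w : Fin r → Fin k → ℝ)
    (t : ℝ) (A : Fin n) (v : Fin k → ℝ) :
    ((x, p, w) : EE n k r) + t • ePRow (r := r) A v = (x, p + t • rowM A v, w) := by
  simp [ePRow, Prod.ext_iff]

lemma add_smul_eW (x : Fin n → ℝ) (p : Fin n → Fin k → ℝ) (w : Fin r → Fin k → ℝ)
    (t : ℝ) (F' : Fin r) (v : Fin k → ℝ) :
    ((x, p, w) : EE n k r) + t • eW (n := n) F' v = (x, p, w + t • rowM F' v) := by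
  simp [eW, Prod.ext_iff]

end Main

end Stmt13

namespace Stmt13

open Topology Filter

section Core

variable {n k r : ℕ} {U : Set (Fin n → ℝ)}
  (L : (Fin n → ℝ) → (Fin n → Fin k → ℝ) → (Fin r → Fin k → ℝ) → ℝ)
  (hU : IsOpen U)
  (hsm : ContDiffOn ℝ (⊤ : ℕ∞) (Phi L)
    (U ×ˢ (Set.univ : Set ((Fin n → Fin k → ℝ) × (Fin r → Fin k → ℝ)))))

include hU hsm

lemma contDiffAt_Phi {y : EE n k r} (hy : y.1 ∈ U) : ContDiffAt ℝ (⊤ : ℕ∞) (Phi L) y :=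
  hsm.contDiffAt ((hU.prod isOpen_univ).mem_nhds ⟨hy, trivial⟩)

lemma contDiffAt_D1 {y : EE n k r} (hy : y.1 ∈ U) :
    ContDiffAt ℝ (⊤ : ℕ∞) (fderiv ℝ (Phi L)) y :=
  (contDiffAt_Phi L hU hsm hy).fderiv_right (by simp)

lemma contDiffAt_D2 {y : EE n k r} (hy : y.1 ∈ U) :
    ContDiffAt ℝ (⊤ : ℕ∞) (fderiv ℝ (fderiv ℝ (Phi L))) y :=
  (contDiffAt_D1 L hU hsm hy).fderiv_right (by simp)

lemma dPhi {y : EE n k r} (hy : y.1 ∈ U) : DifferentiableAt ℝ (Phi L) y :=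
  (contDiffAt_Phi L hU hsm hy).differentiableAt (by simp)

lemma dD1 {y : EE n k r} (hy : y.1 ∈ U) : DifferentiableAt ℝ (fderiv ℝ (Phi L)) y :=
  (contDiffAt_D1 L hU hsm hy).differentiableAt (by simp)

lemma dD2 {y : EE n k r} (hy : y.1 ∈ U) :
    DifferentiableAt ℝ (fderiv ℝ (fderiv ℝ (Phi L))) y :=
  (contDiffAt_D2 L hU hsm hy).differentiableAt (by simp)

lemma pdM_inner {x' : Fin n → ℝ} (hx' : x' ∈ U) (p : Fin n → Fin k → ℝ)
    (w : Fin r → Fin k → ℝ) (A : Fin n) (K : Fin k) :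
    pdM (fun p' => L x' p' w) A K p = fderiv ℝ (Phi L) (x', p, w) (eP A K) := by
  rw [pdM_eq_deriv_line]
  have he : (fun t : ℝ => L x' (p + t • bM A K) w)
      = fun t : ℝ => Phi L (((x', p, w) : EE n k r) + t • eP A K) := by
    funext t
    rw [eP, add_smul_ePRow, rowM_single]
    rfl
  rw [he]
  exact deriv_line₀ _ (dPhi L hU hsm hx')

lemma D2_xA {x : Fin n → ℝ} (hx : x ∈ U) (p : Fin n → Fin k → ℝ)
    (w : Fin r → Fin k → ℝ) (A : Fin n) (K : Fin k) :
    pdV (fun x' => pdM (fun p' => L x' p' w) A K p) A x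
      = fderiv ℝ (fderiv ℝ (Phi L)) (x, p, w) (eX A) (eP A K) := by
  rw [pdV_eq_deriv_line]
  have hcont : Continuous fun t : ℝ => x + t • bV (a := n) A := by fun_prop
  have hmem : ∀ᶠ t in 𝓝 (0 : ℝ), x + t • bV A ∈ U := by
    have h0 : (0 : ℝ) ∈ (fun t : ℝ => x + t • bV (a := n) A) ⁻¹' U := by simpa using hx
    exact (hU.preimage hcont).mem_nhds h0
  have hev : (fun t : ℝ => pdM (fun p' => L (x + t • bV A) p' w) A K p)
      =ᶠ[𝓝 (0:ℝ)] fun t : ℝ =>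
        fderiv ℝ (Phi L) (((x, p, w) : EE n k r) + t • eX A) (eP A K) := by
    filter_upwards [hmem] with t ht
    rw [pdM_inner L hU hsm ht, add_smul_eX]
  rw [hev.deriv_eq]
  exact deriv_line_clm₀ _ _ (dD1 L hU hsm hx)

end Core

end Stmt13

namespace Stmt13

open Topology Filter

section Core2

variable {n k r : ℕ} {U : Set (Fin n → ℝ)}
  (L : (Fin n → ℝ) → (Fin n → Fin k → ℝ) → (Fin r → Fin k → ℝ) → ℝ)

lemma ePRow_add (A : Fin n) (v v' : Fin k → ℝ) :
    ePRow (r := r) A (v + v') = ePRow A v + ePRow A v' := by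
  simp [ePRow, rowM_add, Prod.ext_iff]

lemma ePRow_smul (A : Fin n) (c : ℝ) (v : Fin k → ℝ) :
    ePRow (r := r) A (c • v) = c • ePRow A v := by
  simp [ePRow, rowM_smul, Prod.ext_iff]

lemma ePRow_eq_sum (A : Fin n) (v : Fin k → ℝ) :
    ePRow (r := r) A v = ∑ K, v K • eP A K := by
  unfold eP ePRow
  rw [rowM_eq_sum]
  refine Prod.ext ?_ (Prod.ext ?_ ?_) <;> simp [Prod.fst_sum, Prod.snd_sum]

lemma eW_eq_sum (F' : Fin r) (v : Fin k → ℝ) :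
    eW (n := n) (k := k) F' v = ∑ K, v K • eWc F' K := by
  unfold eWc eW
  rw [rowM_eq_sum]
  refine Prod.ext ?_ (Prod.ext ?_ ?_) <;> simp [Prod.fst_sum, Prod.snd_sum]

/-- The key bilinear quantity `S(x,p,w,v) = ∑_A ∂²Φ(x,p,w)(e_A, E_A ⊗ v)`. -/
def SS (x : Fin n → ℝ) (p : Fin n → Fin k → ℝ) (w : Fin r → Fin k → ℝ)
    (v : Fin k → ℝ) : ℝ :=
  ∑ A, fderiv ℝ (fderiv ℝ (Phi L)) (x, p, w) (eX A) (ePRow A v)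

lemma SS_add (x : Fin n → ℝ) (p : Fin n → Fin k → ℝ) (w : Fin r → Fin k → ℝ)
    (v v' : Fin k → ℝ) :
    SS L x p w (v + v') = SS L x p w v + SS L x p w v' := by
  unfold SS
  rw [← Finset.sum_add_distrib]
  exact Finset.sum_congr rfl fun A _ => by rw [ePRow_add, map_add]

lemma SS_smul (x : Fin n → ℝ) (p : Fin n → Fin k → ℝ) (w : Fin r → Fin k → ℝ)
    (c : ℝ) (v : Fin k → ℝ) :
    SS L x p w (c • v) = c * SS L x p w v := by
  unfold SS
  rw [Finset.mul_sum]
  exact Finset.sum_congr rfl fun A _ => by rw [ePRow_smul, ContinuousLinearMap.map_smul]; rfl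

variable {U : Set (Fin n → ℝ)} (hU : IsOpen U)
  (hsm : ContDiffOn ℝ (⊤ : ℕ∞) (Phi L)
    (U ×ˢ (Set.univ : Set ((Fin n → Fin k → ℝ) × (Fin r → Fin k → ℝ)))))

include hU hsm

lemma Dmix_eq {x : Fin n → ℝ} (hx : x ∈ U) (p : Fin n → Fin k → ℝ)
    (what : Fin (r + 1) → Fin k → ℝ) :
    Dmix L x p what
      = (-1 : ℝ) ^ r * SS L x p (fun F => what (Fin.castSucc F)) (what (Fin.last r)) := by
  unfold Dmix SS
  congr 1
  rw [Finset.sum_comm]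
  refine Finset.sum_congr rfl fun A _ => ?_
  rw [ePRow_eq_sum, map_sum]
  refine Finset.sum_congr rfl fun K _ => ?_
  rw [ContinuousLinearMap.map_smul, smul_eq_mul, D2_xA L hU hsm hx]

lemma sym2 {y : EE n k r} (hy : y.1 ∈ U) (a b : EE n k r) :
    fderiv ℝ (fderiv ℝ (Phi L)) y a b = fderiv ℝ (fderiv ℝ (Phi L)) y b a :=
  (contDiffAt_Phi L hU hsm hy).isSymmSndFDerivAt (by simp; exact WithTop.coe_le_coe.2 le_top) a b

lemma D2_apply {y : EE n k r} (hy : y.1 ∈ U) (u b : EE n k r) :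
    fderiv ℝ (fun y' => fderiv ℝ (Phi L) y' b) y u
      = fderiv ℝ (fderiv ℝ (Phi L)) y u b := by
  rw [fderiv_clm_apply (dD1 L hU hsm hy) (differentiableAt_const b)]
  simp

lemma D3_apply {y : EE n k r} (hy : y.1 ∈ U) (u a b : EE n k r) :
    fderiv ℝ (fun y' => fderiv ℝ (fderiv ℝ (Phi L)) y' a b) y u
      = fderiv ℝ (fderiv ℝ (fderiv ℝ (Phi L))) y u a b := by
  rw [fderiv_clm_apply ((dD2 L hU hsm hy).clm_apply (differentiableAt_const a))
    (differentiableAt_const b)]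
  rw [fderiv_clm_apply (dD2 L hU hsm hy) (differentiableAt_const a)]
  simp

end Core2

end Stmt13

namespace Stmt13

open Topology Filter

section Core3

variable {n k r : ℕ} {U : Set (Fin n → ℝ)}
  (L : (Fin n → ℝ) → (Fin n → Fin k → ℝ) → (Fin r → Fin k → ℝ) → ℝ)
  (hU : IsOpen U)
  (hsm : ContDiffOn ℝ (⊤ : ℕ∞) (Phi L)
    (U ×ˢ (Set.univ : Set ((Fin n → Fin k → ℝ) × (Fin r → Fin k → ℝ)))))

include hU hsm

lemma sym3_23 {y : EE n k r} (hy : y.1 ∈ U) (u a b : EE n k r) :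
    fderiv ℝ (fderiv ℝ (fderiv ℝ (Phi L))) y u a b
      = fderiv ℝ (fderiv ℝ (fderiv ℝ (Phi L))) y u b a := by
  have hev : (fun y' => fderiv ℝ (fderiv ℝ (Phi L)) y' a b)
      =ᶠ[𝓝 y] (fun y' => fderiv ℝ (fderiv ℝ (Phi L)) y' b a) := by
    filter_upwards [(hU.prod isOpen_univ).mem_nhds ⟨hy, trivial⟩] with y' hy'
    exact sym2 L hU hsm hy'.1 a b
  rw [← D3_apply L hU hsm hy u a b, hev.fderiv_eq, D3_apply L hU hsm hy u b a]

lemma sym3_12 {y : EE n k r} (hy : y.1 ∈ U) (u a b : EE n k r) :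
    fderiv ℝ (fderiv ℝ (fderiv ℝ (Phi L))) y u a b
      = fderiv ℝ (fderiv ℝ (fderiv ℝ (Phi L))) y a u b := by
  have hg : ContDiffAt ℝ (⊤ : ℕ∞) (fun y' => fderiv ℝ (Phi L) y' b) y :=
    (contDiffAt_D1 L hU hsm hy).clm_apply contDiffAt_const
  have hsymm := hg.isSymmSndFDerivAt (by simp; exact WithTop.coe_le_coe.2 le_top)
  have hdg : DifferentiableAt ℝ (fderiv ℝ (fun y' => fderiv ℝ (Phi L) y' b)) y :=
    (hg.fderiv_right (m := (⊤ : ℕ∞)) (by simp)).differentiableAt (by simp)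
  have key : ∀ u' a' : EE n k r,
      fderiv ℝ (fderiv ℝ (fun y' => fderiv ℝ (Phi L) y' b)) y u' a'
        = fderiv ℝ (fderiv ℝ (fderiv ℝ (Phi L))) y u' a' b := by
    intro u' a'
    have e1 : fderiv ℝ (fderiv ℝ (fun y' => fderiv ℝ (Phi L) y' b)) y u' a'
        = fderiv ℝ (fun y' => fderiv ℝ (fun y'' => fderiv ℝ (Phi L) y'' b) y' a') y u' := by
      rw [fderiv_clm_apply hdg (differentiableAt_const a')]
      simp
    have hev : (fun y' => fderiv ℝ (fun y'' => fderiv ℝ (Phi L) y'' b) y' a')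
        =ᶠ[𝓝 y] fun y' => fderiv ℝ (fderiv ℝ (Phi L)) y' a' b := by
      filter_upwards [(hU.prod isOpen_univ).mem_nhds ⟨hy, trivial⟩] with y' hy'
      rw [fderiv_clm_apply (dD1 L hU hsm hy'.1) (differentiableAt_const b)]
      simp
    rw [e1, hev.fderiv_eq, D3_apply L hU hsm hy u' a' b]
  have h' := hsymm u a
  rw [key u a, key a u] at h'
  exact h'

end Core3

end Stmt13

namespace Stmt13

open Topology Filter

section Core4

variable {n k r : ℕ} {U : Set (Fin n → ℝ)}
  (L : (Fin n → ℝ) → (Fin n → Fin k → ℝ) → (Fin r → Fin k → ℝ) → ℝ)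

/-- The direction in `EE` corresponding to a cell of the stacked matrix. -/
def em (i : Fin (n + r)) (j : Fin k) : EE n k r :=
  (0, fun A => bM i j (Fin.castAdd r A), fun F => bM i j (Fin.natAdd n F))

lemma em_castAdd (A : Fin n) (K : Fin k) :
    em (n := n) (k := k) (r := r) (Fin.castAdd r A) K = eP A K := by
  refine Prod.ext rfl (Prod.ext ?_ ?_)
  · funext A' K'
    have : (Fin.castAdd r A' = Fin.castAdd r A) ↔ A' = A := by
      simp [Fin.ext_iff]
    simp [em, bM, eP, ePRow, rowM, Pi.single_apply, this]
    by_cases h1 : A' = A <;> by_cases h2 : K' = K <;> simp [h1, h2]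
  · funext F' K'
    have : ¬ (Fin.natAdd n F' = Fin.castAdd r A) := by
      simp only [Fin.ext_iff, Fin.coe_natAdd, Fin.coe_castAdd]
      omega
    simp [em, bM, eP, ePRow, this]

lemma em_natAdd (F : Fin r) (K : Fin k) :
    em (n := n) (k := k) (r := r) (Fin.natAdd n F) K = eWc F K := by
  refine Prod.ext rfl (Prod.ext ?_ ?_)
  · funext A' K'
    have : ¬ (Fin.castAdd r A' = Fin.natAdd n F) := by
      simp only [Fin.ext_iff, Fin.coe_natAdd, Fin.coe_castAdd]
      omega
    simp [em, bM, eWc, eW, rowM, this]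
  · funext F' K'
    have : (Fin.natAdd n F' = Fin.natAdd n F) ↔ F' = F := by
      simp [Fin.ext_iff]
    simp [em, bM, eWc, eW, rowM, Pi.single_apply, this]
    by_cases h1 : F' = F <;> by_cases h2 : K' = K <;> simp [h1, h2]

lemma unp_add_smul (x : Fin n → ℝ) (m : Fin (n + r) → Fin k → ℝ) (t : ℝ)
    (i : Fin (n + r)) (j : Fin k) :
    ((x, fun A => m (Fin.castAdd r A), fun F => m (Fin.natAdd n F)) : EE n k r)
        + t • em i j
      = (x, fun A => (m + t • bM i j) (Fin.castAdd r A),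
          fun F => (m + t • bM i j) (Fin.natAdd n F)) := by
  simp only [em, Prod.ext_iff, Prod.fst_add, Prod.snd_add, Prod.smul_mk]
  refine ⟨by simp, ?_, ?_⟩ <;> rfl

variable {U : Set (Fin n → ℝ)} (hU : IsOpen U)
  (hsm : ContDiffOn ℝ (⊤ : ℕ∞) (Phi L)
    (U ×ˢ (Set.univ : Set ((Fin n → Fin k → ℝ) × (Fin r → Fin k → ℝ)))))

include hU hsm

lemma stacked_pdM {x : Fin n → ℝ} (hx : x ∈ U) (i : Fin (n + r)) (j : Fin k)
    (m : Fin (n + r) → Fin k → ℝ) :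
    pdM (fun m' => L x (fun A => m' (Fin.castAdd r A)) (fun F => m' (Fin.natAdd n F))) i j m
      = fderiv ℝ (Phi L)
          (x, fun A => m (Fin.castAdd r A), fun F => m (Fin.natAdd n F)) (em i j) := by
  rw [pdM_eq_deriv_line]
  have he : (fun t : ℝ => L x (fun A => (m + t • bM i j) (Fin.castAdd r A))
        (fun F => (m + t • bM i j) (Fin.natAdd n F)))
      = fun t : ℝ => Phi L
          (((x, fun A => m (Fin.castAdd r A), fun F => m (Fin.natAdd n F)) : EE n k r)
            + t • em i j) := by
    funext t
    rw [unp_add_smul]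
    rfl
  rw [he]
  exact deriv_line₀ _ (dPhi L hU hsm hx)

lemma stacked_pdM2 {x : Fin n → ℝ} (hx : x ∈ U) (i₁ i₂ : Fin (n + r)) (j₁ j₂ : Fin k)
    (m : Fin (n + r) → Fin k → ℝ) :
    pdM (fun m' => pdM
        (fun m'' => L x (fun A => m'' (Fin.castAdd r A)) (fun F => m'' (Fin.natAdd n F)))
        i₂ j₂ m') i₁ j₁ m
      = fderiv ℝ (fderiv ℝ (Phi L))
          (x, fun A => m (Fin.castAdd r A), fun F => m (Fin.natAdd n F))
          (em i₁ j₁) (em i₂ j₂) := by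
  rw [pdM_eq_deriv_line]
  have he : (fun t : ℝ => pdM
        (fun m'' => L x (fun A => m'' (Fin.castAdd r A)) (fun F => m'' (Fin.natAdd n F)))
        i₂ j₂ (m + t • bM i₁ j₁))
      = fun t : ℝ => fderiv ℝ (Phi L)
          (((x, fun A => m (Fin.castAdd r A), fun F => m (Fin.natAdd n F)) : EE n k r)
            + t • em i₁ j₁) (em i₂ j₂) := by
    funext t
    rw [stacked_pdM L hU hsm hx, unp_add_smul]
  rw [he]
  exact deriv_line_clm₀ _ _ (dD1 L hU hsm hx)

lemma fund_D2
    (hfund : ∀ x ∈ U, FundEqs (fun m : Fin (n + r) → Fin k → ℝ =>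
      L x (fun A => m (Fin.castAdd r A)) (fun F => m (Fin.natAdd n F))))
    {x : Fin n → ℝ} (hx : x ∈ U) (p : Fin n → Fin k → ℝ) (w : Fin r → Fin k → ℝ)
    (A : Fin n) (F : Fin r) (K M : Fin k) :
    fderiv ℝ (fderiv ℝ (Phi L)) (x, p, w) (eP A K) (eWc F M)
      + fderiv ℝ (fderiv ℝ (Phi L)) (x, p, w) (eP A M) (eWc F K) = 0 := by
  have h := hfund x hx (Fin.castAdd r A) (Fin.natAdd n F) K M
    (fun i => Fin.addCases (fun A' => p A') (fun F' => w F') i)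
  rw [stacked_pdM2 L hU hsm hx, stacked_pdM2 L hU hsm hx] at h
  have hp : (fun A' => Fin.addCases (motive := fun _ => Fin k → ℝ)
      (fun A'' => p A'') (fun F'' => w F'') (Fin.castAdd r A')) = p := by
    funext A'; simp
  have hw : (fun F' => Fin.addCases (motive := fun _ => Fin k → ℝ)
      (fun A'' => p A'') (fun F'' => w F'') (Fin.natAdd n F')) = w := by
    funext F'; simp
  rw [hp, hw, em_castAdd, em_natAdd, em_castAdd, em_natAdd] at h
  rw [sym2 L hU hsm (show ((x,p,w) : EE n k r).1 ∈ U from hx) (eWc F K) (eP A M)] at h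
  linarith [h]

end Core4

end Stmt13

namespace Stmt13

open Topology Filter

section Core5

variable {n k r : ℕ} {U : Set (Fin n → ℝ)}
  (L : (Fin n → ℝ) → (Fin n → Fin k → ℝ) → (Fin r → Fin k → ℝ) → ℝ)

lemma antisym_sum {c : Fin k → Fin k → ℝ} (h : ∀ K M, c K M + c M K = 0)
    (v : Fin k → ℝ) : (∑ K, ∑ M, v K * v M * c K M) = 0 := by
  have key : (∑ K, ∑ M, v K * v M * c K M) = - (∑ K, ∑ M, v K * v M * c K M) := by
    calc (∑ K, ∑ M, v K * v M * c K M)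
        = ∑ K, ∑ M, v K * v M * (-(c M K)) := by
          refine Finset.sum_congr rfl fun K _ => Finset.sum_congr rfl fun M _ => ?_
          have := h K M; rw [show c K M = -(c M K) by linarith]
      _ = - ∑ K, ∑ M, v K * v M * c M K := by
          rw [← Finset.sum_neg_distrib]
          refine Finset.sum_congr rfl fun K _ => ?_
          rw [← Finset.sum_neg_distrib]
          exact Finset.sum_congr rfl fun M _ => by ring
      _ = - ∑ M, ∑ K, v K * v M * c M K := by rw [Finset.sum_comm]
      _ = - ∑ K, ∑ M, v K * v M * c K M := by
          congr 1
          exact Finset.sum_congr rfl fun K _ => Finset.sum_congr rfl fun M _ => by ring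
  linarith

variable {U : Set (Fin n → ℝ)} (hU : IsOpen U)
  (hsm : ContDiffOn ℝ (⊤ : ℕ∞) (Phi L)
    (U ×ˢ (Set.univ : Set ((Fin n → Fin k → ℝ) × (Fin r → Fin k → ℝ)))))

include hU hsm

lemma fund_D3
    (hfund : ∀ x ∈ U, FundEqs (fun m : Fin (n + r) → Fin k → ℝ =>
      L x (fun A => m (Fin.castAdd r A)) (fun F => m (Fin.natAdd n F))))
    {y : EE n k r} (hy : y.1 ∈ U) (B : Fin n)
    (A : Fin n) (F : Fin r) (K M : Fin k) :
    fderiv ℝ (fderiv ℝ (fderiv ℝ (Phi L))) y (eX B) (eP A K) (eWc F M)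
      + fderiv ℝ (fderiv ℝ (fderiv ℝ (Phi L))) y (eX B) (eP A M) (eWc F K) = 0 := by
  have hd1 : DifferentiableAt ℝ
      (fun y' : EE n k r => fderiv ℝ (fderiv ℝ (Phi L)) y' (eP A K) (eWc F M)) y :=
    ((dD2 L hU hsm hy).clm_apply (differentiableAt_const _)).clm_apply
      (differentiableAt_const _)
  have hd2 : DifferentiableAt ℝ
      (fun y' : EE n k r => fderiv ℝ (fderiv ℝ (Phi L)) y' (eP A M) (eWc F K)) y :=
    ((dD2 L hU hsm hy).clm_apply (differentiableAt_const _)).clm_apply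
      (differentiableAt_const _)
  have hev : (fun y' : EE n k r =>
        fderiv ℝ (fderiv ℝ (Phi L)) y' (eP A K) (eWc F M)
        + fderiv ℝ (fderiv ℝ (Phi L)) y' (eP A M) (eWc F K))
      =ᶠ[𝓝 y] fun _ => (0 : ℝ) := by
    filter_upwards [(hU.prod isOpen_univ).mem_nhds ⟨hy, trivial⟩] with y' hy'
    have := fund_D2 L hU hsm hfund hy'.1 y'.2.1 y'.2.2 A F K M
    simpa using this
  have h0 : fderiv ℝ (fun y' : EE n k r =>
      fderiv ℝ (fderiv ℝ (Phi L)) y' (eP A K) (eWc F M)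
      + fderiv ℝ (fderiv ℝ (Phi L)) y' (eP A M) (eWc F K)) y = 0 := by
    rw [hev.fderiv_eq]; exact fderiv_const_apply 0
  have hadd := fderiv_fun_add hd1 hd2
  rw [hadd] at h0
  have := congrArg (fun g : (EE n k r) →L[ℝ] ℝ => g (eX B)) h0
  simp only [ContinuousLinearMap.add_apply, ContinuousLinearMap.zero_apply] at this
  rw [D3_apply L hU hsm hy, D3_apply L hU hsm hy] at this
  exact this

lemma vanish
    (hfund : ∀ x ∈ U, FundEqs (fun m : Fin (n + r) → Fin k → ℝ =>
      L x (fun A => m (Fin.castAdd r A)) (fun F => m (Fin.natAdd n F))))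
    {x : Fin n → ℝ} (hx : x ∈ U) (p : Fin n → Fin k → ℝ) (w : Fin r → Fin k → ℝ)
    (F : Fin r) (v : Fin k → ℝ) :
    ∑ A, fderiv ℝ (fderiv ℝ (fderiv ℝ (Phi L))) (x, p, w) (eW F v) (eX A) (ePRow A v)
      = 0 := by
  have hy : ((x, p, w) : EE n k r).1 ∈ U := hx
  have step1 : ∀ A : Fin n,
      fderiv ℝ (fderiv ℝ (fderiv ℝ (Phi L))) (x, p, w) (eW F v) (eX A) (ePRow A v)
        = ∑ K, ∑ M, v K * v M *
            fderiv ℝ (fderiv ℝ (fderiv ℝ (Phi L))) (x, p, w) (eX A) (eP A K) (eWc F M) := by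
    intro A
    rw [sym3_12 L hU hsm hy, sym3_23 L hU hsm hy]
    rw [ePRow_eq_sum, map_sum, ContinuousLinearMap.sum_apply]
    refine Finset.sum_congr rfl fun K _ => ?_
    rw [ContinuousLinearMap.map_smul, ContinuousLinearMap.smul_apply, eW_eq_sum, map_sum,
      Finset.smul_sum]
    refine Finset.sum_congr rfl fun M _ => ?_
    rw [ContinuousLinearMap.map_smul]
    simp only [smul_eq_mul]
    ring
  calc ∑ A, fderiv ℝ (fderiv ℝ (fderiv ℝ (Phi L))) (x, p, w) (eW F v) (eX A) (ePRow A v)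
      = ∑ A : Fin n, (0 : ℝ) := by
        refine Finset.sum_congr rfl fun A _ => ?_
        rw [step1 A]
        exact antisym_sum (fun K M => fund_D3 L hU hsm hfund hy A A F K M) v
    _ = 0 := by simp

lemma SS_row
    (hadm : ∀ x ∈ U, ∀ (p : Fin n → Fin k → ℝ) (w : Fin r → Fin k → ℝ)
      (a : Fin n → Fin r → ℝ), L x (p + mmul a w) w = L x p w)
    {x : Fin n → ℝ} (hx : x ∈ U) (p : Fin n → Fin k → ℝ) (w : Fin r → Fin k → ℝ)
    (F : Fin r) : SS L x p w (w F) = 0 := by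
  have hD1row : ∀ x' ∈ U, ∀ A : Fin n,
      fderiv ℝ (Phi L) (x', p, w) (ePRow A (w F)) = 0 := by
    intro x' hx' A
    have hconst : (fun t : ℝ => Phi L (((x', p, w) : EE n k r) + t • ePRow A (w F)))
        = fun _ => L x' p w := by
      funext t
      rw [add_smul_ePRow]
      have hm : p + t • rowM A (w F)
          = p + mmul (fun B G => if B = A ∧ G = F then t else 0) w := by
        funext B M
        by_cases hB : B = A
        · simp [rowM, mmul, hB, ite_and, Finset.sum_ite_eq']
        · simp [rowM, mmul, hB]
      show L x' (p + t • rowM A (w F)) w = L x' p w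
      rw [hm, hadm x' hx' p w _]
    have hd := deriv_line₀ (f := Phi L) (y := ((x', p, w) : EE n k r))
      (ePRow A (w F)) (dPhi L hU hsm hx')
    rw [hconst] at hd
    simp at hd
    exact hd.symm
  unfold SS
  refine Finset.sum_eq_zero fun A _ => ?_
  have hkey := deriv_line_clm₀ (G := fderiv ℝ (Phi L)) (y := ((x, p, w) : EE n k r))
    (eX A) (ePRow A (w F)) (dD1 L hU hsm hx)
  rw [← hkey]
  have hcont : Continuous fun t : ℝ => x + t • bV (a := n) A := by fun_prop
  have hmem : ∀ᶠ t in 𝓝 (0 : ℝ), x + t • bV A ∈ U := by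
    have h0 : (0 : ℝ) ∈ (fun t : ℝ => x + t • bV (a := n) A) ⁻¹' U := by simpa using hx
    exact (hU.preimage hcont).mem_nhds h0
  have hev : (fun t : ℝ =>
      fderiv ℝ (Phi L) (((x, p, w) : EE n k r) + t • eX A) (ePRow A (w F)))
      =ᶠ[𝓝 (0:ℝ)] fun _ => (0 : ℝ) := by
    filter_upwards [hmem] with t ht
    rw [add_smul_eX]
    exact hD1row _ ht A
  rw [hev.deriv_eq]
  simp

lemma SS_shift
    (hfund : ∀ x ∈ U, FundEqs (fun m : Fin (n + r) → Fin k → ℝ =>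
      L x (fun A => m (Fin.castAdd r A)) (fun F => m (Fin.natAdd n F))))
    {x : Fin n → ℝ} (hx : x ∈ U) (p : Fin n → Fin k → ℝ) (w : Fin r → Fin k → ℝ)
    (F : Fin r) (v : Fin k → ℝ) (c : ℝ) :
    SS L x p (w + c • rowM F v) v = SS L x p w v := by
  have hline : ∀ t : ℝ, ((x, p, w) : EE n k r) + t • eW F v
      = (x, p, w + t • rowM F v) := fun t => add_smul_eW x p w t F v
  have hder : ∀ t : ℝ, HasDerivAt (fun s : ℝ => SS L x p (w + s • rowM F v) v) 0 t := by
    intro t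
    have hyt1 : (((x, p, w) : EE n k r) + t • eW F v).1 ∈ U := by
      rw [hline t]; exact hx
    have h1 : ∀ A : Fin n, HasDerivAt
        (fun s : ℝ => fderiv ℝ (fderiv ℝ (Phi L)) (((x,p,w) : EE n k r) + s • eW F v)
          (eX A) (ePRow A v))
        (fderiv ℝ (fderiv ℝ (fderiv ℝ (Phi L))) (((x,p,w) : EE n k r) + t • eW F v)
          (eW F v) (eX A) (ePRow A v)) t := by
      intro A
      have hd2 := HasFDerivAt.comp_hasDerivAt (l := fderiv ℝ (fderiv ℝ (Phi L)))
        (f := fun s : ℝ => ((x,p,w) : EE n k r) + s • eW F v) t (dD2 L hU hsm hyt1).hasFDerivAt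
        (hasDerivAt_line ((x,p,w) : EE n k r) (eW F v) t)
      have h' := hd2.clm_apply (hasDerivAt_const t (eX A))
      have h'' := h'.clm_apply (hasDerivAt_const t (ePRow A v))
      simpa using h''
    have hsum := HasDerivAt.fun_sum (u := Finset.univ) (x := t) (fun A _ => h1 A)
    have heq : (fun s : ℝ => ∑ A, fderiv ℝ (fderiv ℝ (Phi L))
        (((x,p,w) : EE n k r) + s • eW F v) (eX A) (ePRow A v))
        = fun s : ℝ => SS L x p (w + s • rowM F v) v := by
      funext s
      rw [hline s]
      rfl
    rw [heq] at hsum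
    have hz : ∑ A, fderiv ℝ (fderiv ℝ (fderiv ℝ (Phi L)))
        (((x,p,w) : EE n k r) + t • eW F v) (eW F v) (eX A) (ePRow A v) = 0 := by
      rw [hline t]
      exact vanish L hU hsm hfund hx p (w + t • rowM F v) F v
    rwa [hz] at hsum
  have hdiff : Differentiable ℝ (fun s : ℝ => SS L x p (w + s • rowM F v) v) :=
    fun t => (hder t).differentiableAt
  have hconst := is_const_of_deriv_eq_zero hdiff (fun t => (hder t).deriv) c 0
  simpa using hconst

end Core5

end Stmt13

namespace Stmt13

open Topology Filter

section Core6

variable {n k r : ℕ}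
  (L : (Fin n → ℝ) → (Fin n → Fin k → ℝ) → (Fin r → Fin k → ℝ) → ℝ)

/-- Left multiplication by `h` as a linear map on `w`-matrices. -/
def mmulL (h : Fin r → Fin r → ℝ) :
    (Fin r → Fin k → ℝ) →ₗ[ℝ] (Fin r → Fin k → ℝ) where
  toFun w := mmul h w
  map_add' w w' := by
    funext F K
    simp [mmul, mul_add, Finset.sum_add_distrib]
  map_smul' c w := by
    funext F K
    simp only [mmul, Pi.smul_apply, smul_eq_mul, RingHom.id_apply, Finset.mul_sum]
    exact Finset.sum_congr rfl fun j _ => by ring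

/-- The corresponding continuous linear map on the full space. -/
def Tc (h : Fin r → Fin r → ℝ) : EE n k r →L[ℝ] EE n k r :=
  (LinearMap.prodMap LinearMap.id
    (LinearMap.prodMap LinearMap.id (mmulL (k := k) h))).toContinuousLinearMap

lemma Tc_apply (h : Fin r → Fin r → ℝ) (y : EE n k r) :
    (Tc (n := n) (k := k) h) y = (y.1, y.2.1, mmul h y.2.2) := by
  show (LinearMap.prodMap LinearMap.id
    (LinearMap.prodMap LinearMap.id (mmulL (k := k) h))).toContinuousLinearMap y
      = (y.1, y.2.1, mmul h y.2.2)
  rw [LinearMap.coe_toContinuousLinearMap']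
  rfl

lemma mmul_zero (h : Fin r → Fin r → ℝ) : mmul h (0 : Fin r → Fin k → ℝ) = 0 := by
  funext F K
  simp [mmul]

lemma Tc_eX (h : Fin r → Fin r → ℝ) (A : Fin n) :
    Tc (n := n) (k := k) h (eX A) = eX A := by
  rw [Tc_apply]
  simp [eX, mmul_zero, Prod.ext_iff]

lemma Tc_ePRow (h : Fin r → Fin r → ℝ) (A : Fin n) (v : Fin k → ℝ) :
    Tc (n := n) (k := k) h (ePRow A v) = ePRow A v := by
  rw [Tc_apply]
  simp [ePRow, mmul_zero, Prod.ext_iff]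

variable {U : Set (Fin n → ℝ)} (hU : IsOpen U)
  (hsm : ContDiffOn ℝ (⊤ : ℕ∞) (Phi L)
    (U ×ˢ (Set.univ : Set ((Fin n → Fin k → ℝ) × (Fin r → Fin k → ℝ)))))

include hU hsm

lemma SS_left_cov
    (hcov : ∀ x ∈ U, ∀ (p : Fin n → Fin k → ℝ) (w : Fin r → Fin k → ℝ)
      (h : Fin r → Fin r → ℝ), fdet h ≠ 0 → L x p (mmul h w) = fdet h * L x p w)
    {x : Fin n → ℝ} (hx : x ∈ U) (p : Fin n → Fin k → ℝ) (w : Fin r → Fin k → ℝ)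
    (h : Fin r → Fin r → ℝ) (hdet : fdet h ≠ 0) (v : Fin k → ℝ) :
    SS L x p (mmul h w) v = fdet h * SS L x p w v := by
  set T := Tc (n := n) (k := k) h with hT_def
  have hT1 : ∀ y : EE n k r, (T y).1 = y.1 := fun y => rfl
  have hfirst : ∀ y : EE n k r, y.1 ∈ U →
      (fderiv ℝ (Phi L) (T y)).comp T = fdet h • fderiv ℝ (Phi L) y := by
    intro y hy
    have hev : (Phi L ∘ ⇑T) =ᶠ[𝓝 y] fun y' => fdet h * Phi L y' := by
      filter_upwards [(hU.prod isOpen_univ).mem_nhds ⟨hy, trivial⟩] with y' hy'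
      show Phi L (T y') = fdet h * Phi L y'
      rw [Tc_apply]
      exact hcov y'.1 hy'.1 y'.2.1 y'.2.2 h hdet
    have e1 : fderiv ℝ (Phi L ∘ ⇑T) y = (fderiv ℝ (Phi L) (T y)).comp T :=
      ((dPhi L hU hsm (show (T y).1 ∈ U from hy)).hasFDerivAt.comp y T.hasFDerivAt).fderiv
    have e2 : fderiv ℝ (fun y' => fdet h * Phi L y') y = fdet h • fderiv ℝ (Phi L) y :=
      fderiv_const_mul (dPhi L hU hsm hy) (fdet h)
    rw [← e1, hev.fderiv_eq, e2]
  have hsecond : ∀ y : EE n k r, y.1 ∈ U → ∀ u u' : EE n k r, T u = u → T u' = u' →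
      fderiv ℝ (fderiv ℝ (Phi L)) (T y) u u'
        = fdet h * fderiv ℝ (fderiv ℝ (Phi L)) y u u' := by
    intro y hy u u' hu hu'
    have hev2 : (fun y' => fderiv ℝ (Phi L) (T y') u')
        =ᶠ[𝓝 y] fun y' => fdet h * fderiv ℝ (Phi L) y' u' := by
      filter_upwards [(hU.prod isOpen_univ).mem_nhds ⟨hy, trivial⟩] with y' hy'
      have := congrArg (fun g : (EE n k r) →L[ℝ] ℝ => g u') (hfirst y' hy'.1)
      simp only [ContinuousLinearMap.comp_apply, ContinuousLinearMap.smul_apply,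
        smul_eq_mul, hu'] at this
      exact this
    have hc : HasFDerivAt (fun y' => fderiv ℝ (Phi L) (T y'))
        ((fderiv ℝ (fderiv ℝ (Phi L)) (T y)).comp T) y :=
      (dD1 L hU hsm (show (T y).1 ∈ U from hy)).hasFDerivAt.comp y T.hasFDerivAt
    have d1 : fderiv ℝ (fun y' => fderiv ℝ (Phi L) (T y') u') y u
        = fderiv ℝ (fderiv ℝ (Phi L)) (T y) (T u) u' := by
      rw [fderiv_clm_apply hc.differentiableAt (differentiableAt_const u'), hc.fderiv]
      simp
    have d2 : fderiv ℝ (fun y' => fdet h * fderiv ℝ (Phi L) y' u') y u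
        = fdet h * fderiv ℝ (fderiv ℝ (Phi L)) y u u' := by
      rw [fderiv_const_mul ((dD1 L hU hsm hy).clm_apply (differentiableAt_const u'))
        (fdet h)]
      simp only [Pi.smul_apply, ContinuousLinearMap.smul_apply, smul_eq_mul]
      rw [D2_apply L hU hsm hy u u']
    rw [hu] at d1
    rw [← d1, hev2.fderiv_eq, d2]
  unfold SS
  rw [Finset.mul_sum]
  refine Finset.sum_congr rfl fun A _ => ?_
  have := hsecond (x, p, w) hx (eX A) (ePRow A v) (Tc_eX h A) (Tc_ePRow h A v)
  rw [Tc_apply] at this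
  exact this

end Core6

end Stmt13

namespace Stmt13

section Alg

variable {k m : ℕ}

lemma fdet_of (M : Matrix (Fin m) (Fin m) ℝ) : fdet (fun i j => M i j) = M.det := rfl

lemma mmul_matrix_assoc (A B : Matrix (Fin m) (Fin m) ℝ) (w : Fin m → Fin k → ℝ) :
    mmul (fun i j => (A * B) i j) w
      = mmul (fun i j => A i j) (mmul (fun i j => B i j) w) := by
  funext i K
  simp only [mmul, Matrix.mul_apply, Finset.sum_mul, Finset.mul_sum]
  rw [Finset.sum_comm]
  exact Finset.sum_congr rfl fun l _ => Finset.sum_congr rfl fun j _ => by ring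

lemma mmul_diagonal (D : Fin m → ℝ) (w : Fin m → Fin k → ℝ) :
    mmul (fun i j => Matrix.diagonal D i j) w = fun i K => D i * w i K := by
  funext i K
  simp [mmul, Matrix.diagonal_apply, ite_mul, Finset.sum_ite_eq]

lemma mmul_transvection (i j : Fin m) (c : ℝ) (w : Fin m → Fin k → ℝ) :
    mmul (fun a b => Matrix.transvection i j c a b) w
      = fun a K => w a K + (if a = i then c * w j K else 0) := by
  funext a K
  have hterm : ∀ b : Fin m, (Matrix.transvection i j c a b) * w b K
      = (if a = b then w b K else 0) + (if i = a ∧ j = b then c * w b K else 0) := by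
    intro b
    simp only [Matrix.transvection, Matrix.add_apply, Matrix.one_apply,
      Matrix.single, Matrix.of_apply]
    split_ifs <;> ring
  show (∑ b, (Matrix.transvection i j c a b) * w b K) = _
  rw [Finset.sum_congr rfl (fun b _ => hterm b), Finset.sum_add_distrib]
  congr 1
  · simp [Finset.sum_ite_eq]
  · by_cases hai : i = a
    · simp [hai, ite_and, Finset.sum_ite_eq', eq_comm]
    · have : ¬ (a = i) := fun h => hai h.symm
      simp [hai, this, ite_and]

end Alg

end Stmt13
open Stmt13 in
/-- The differential `Δ𝓛` of an even mixed form `𝓛` of codegree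
`k` and additional degree `r` on `U` is left-covariant:
`Δ𝓛(x, p, ĥ·ŵ) = det ĥ · Δ𝓛(x, p, ŵ)` for all invertible `ĥ ∈ GL(r+1)`. -/
theorem statement_13 (n k r : ℕ) (U : Set (Fin n → ℝ)) (hU : IsOpen U)
    (L : (Fin n → ℝ) → (Fin n → Fin k → ℝ) → (Fin r → Fin k → ℝ) → ℝ)
    (hL : IsMixedForm U L) :
    ∀ x ∈ U, ∀ (p : Fin n → Fin k → ℝ) (what : Fin (r + 1) → Fin k → ℝ)
        (hhat : Fin (r + 1) → Fin (r + 1) → ℝ), fdet hhat ≠ 0 →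
      Dmix L x p (mmul hhat what) = fdet hhat * Dmix L x p what := by
  obtain ⟨hsm, hrcov, hlcov, hadm, hfund⟩ := hL
  intro x hx p what hhat hdet
  have hsm' : ContDiffOn ℝ (⊤ : ℕ∞) (Stmt13.Phi L)
      (U ×ˢ (Set.univ : Set ((Fin n → Fin k → ℝ) × (Fin r → Fin k → ℝ)))) := hsm
  have key : ∀ M : Matrix (Fin (r+1)) (Fin (r+1)) ℝ, M.det ≠ 0 →
      ∀ w' : Fin (r+1) → Fin k → ℝ,
        Dmix L x p (mmul (fun i j => M i j) w') = M.det * Dmix L x p w' := by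
    intro M hM
    refine Matrix.diagonal_transvection_induction_of_det_ne_zero
      (P := fun M => ∀ w' : Fin (r+1) → Fin k → ℝ,
        Dmix L x p (mmul (fun i j => M i j) w') = M.det * Dmix L x p w')
      M hM ?_ ?_ ?_
    · -- diagonal matrices
      intro D hD w'
      have hDi : ∀ i, D i ≠ 0 := by
        intro i hi
        apply hD
        rw [Matrix.det_diagonal]
        exact Finset.prod_eq_zero (Finset.mem_univ i) hi
      set dr : Fin r → Fin r → ℝ := fun F G => if F = G then D F.castSucc else 0 with hdr
      have hdetdr : fdet dr = ∏ F : Fin r, D F.castSucc := by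
        have hofdr : Matrix.of dr = Matrix.diagonal (fun F => D F.castSucc) := by
          ext F G
          simp [hdr, Matrix.diagonal_apply]
        show (Matrix.of dr).det = _
        rw [hofdr, Matrix.det_diagonal]
      have hdrne : fdet dr ≠ 0 := by
        rw [hdetdr]
        exact Finset.prod_ne_zero_iff.2 fun F _ => hDi _
      rw [Dmix_eq L hU hsm' hx p _, Dmix_eq L hU hsm' hx p w']
      have htop : (fun F : Fin r =>
            (mmul (fun i j => Matrix.diagonal D i j) w') (Fin.castSucc F))
          = mmul dr (fun F => w' (Fin.castSucc F)) := by
        funext F K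
        rw [mmul_diagonal]
        simp [hdr, mmul, ite_mul, Finset.sum_ite_eq]
      have hlast : (mmul (fun i j => Matrix.diagonal D i j) w') (Fin.last r)
          = D (Fin.last r) • w' (Fin.last r) := by
        funext K
        rw [mmul_diagonal]
        simp
      rw [htop, hlast, SS_smul, SS_left_cov L hU hsm' hlcov hx _ _ dr hdrne, hdetdr,
        Matrix.det_diagonal, Fin.prod_univ_castSucc]
      ring
    · -- transvections
      rintro ⟨i, j, hij, c⟩ w'
      show Dmix L x p (mmul (fun a b => Matrix.transvection i j c a b) w')
          = (Matrix.transvection i j c).det * Dmix L x p w'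
      rw [mmul_transvection i j c w', Matrix.det_transvection_of_ne _ _ hij, one_mul]
      rw [Dmix_eq L hU hsm' hx p _, Dmix_eq L hU hsm' hx p w']
      by_cases hi : i = Fin.last r
      · have hjne : j ≠ Fin.last r := fun h => hij (hi.trans h.symm)
        obtain ⟨j', hj'⟩ := Fin.exists_castSucc_eq.2 hjne
        have htop : (fun F : Fin r =>
              (fun a K => w' a K + (if a = i then c * w' j K else 0)) (Fin.castSucc F))
            = fun F => w' (Fin.castSucc F) := by
          funext F K
          have : Fin.castSucc F ≠ i := by rw [hi]; exact (Fin.castSucc_lt_last F).ne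
          simp [this]
        have hlastv : (fun K => w' (Fin.last r) K + (if Fin.last r = i then c * w' j K else 0))
            = w' (Fin.last r) + c • w' j := by
          funext K
          simp [hi, smul_eq_mul]
        rw [htop, hlastv, SS_add, SS_smul]
        have hwj : w' j = (fun F => w' (Fin.castSucc F)) j' := by rw [← hj']
        rw [hwj, SS_row L hU hsm' hadm hx]
        ring
      · obtain ⟨i', hi'⟩ := Fin.exists_castSucc_eq.2 hi
        have hlastv : (fun K => w' (Fin.last r) K + (if Fin.last r = i then c * w' j K else 0))
            = w' (Fin.last r) := by
          funext K
          have : ¬ (Fin.last r = i) := fun h => hi h.symm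
          simp [this]
        have hcs : ∀ F : Fin r, (Fin.castSucc F = i) ↔ (F = i') := by
          intro F
          rw [← hi', Fin.castSucc_inj]
        by_cases hj : j = Fin.last r
        · have htop : (fun F : Fin r =>
                (fun a K => w' a K + (if a = i then c * w' j K else 0)) (Fin.castSucc F))
              = (fun F => w' (Fin.castSucc F)) + c • rowM i' (w' (Fin.last r)) := by
            funext F K
            by_cases hF : F = i'
            · subst hF
              simp [rowM, hi', hj]
            · simp [rowM, hF, hcs F]
          rw [htop, hlastv, SS_shift L hU hsm' hfund hx]
        · obtain ⟨j', hj'⟩ := Fin.exists_castSucc_eq.2 hj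
          have hij' : i' ≠ j' := by
            rintro rfl
            exact hij (hi'.symm.trans hj')
          have htop : (fun F : Fin r =>
                (fun a K => w' a K + (if a = i then c * w' j K else 0)) (Fin.castSucc F))
              = mmul (fun a b => Matrix.transvection i' j' c a b)
                  (fun F => w' (Fin.castSucc F)) := by
            rw [mmul_transvection]
            funext F K
            by_cases hF : F = i'
            · subst hF
              simp [hi', ← hj']
            · simp [hF, hcs F]
          have hdet1 : fdet (fun a b => Matrix.transvection i' j' c a b) ≠ 0 := by
            rw [fdet_of, Matrix.det_transvection_of_ne _ _ hij']
            norm_num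
          rw [htop, hlastv, SS_left_cov L hU hsm' hlcov hx _ _ _ hdet1,
            fdet_of, Matrix.det_transvection_of_ne _ _ hij']
          ring
    · -- products
      intro A B hA hB ihA ihB w'
      rw [mmul_matrix_assoc, ihA, ihB, Matrix.det_mul]
      ring
  exact key (Matrix.of hhat) hdet what
end
end

section
/- Let 𝓛 be an even mixed form of codegree k and additional degree r on an open set U ⊆ ℝⁿ, and let Δ𝓛 be its differential, Δ𝓛(x, p, ŵ) := (−1)^r Σ_{K=1}^{k} Σ_{A=1}^{n} w'^K (∂²𝓛/∂x^A∂p_A^K)(x, p, w), where ŵ ∈ Matrix((r+1)×k, ℝ) has first r rows w and last row w'. Then Δ𝓛 is admissible: Δ𝓛(x, p + a·ŵ, ŵ) = Δ𝓛(x, p, ŵ) for all x, p, ŵ and all a ∈ Matrix(n×(r+1), ℝ). -/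
open MeasureTheory
open scoped BigOperators

noncomputable section

/-! ### Auxiliary material for Statement 14 -/

/-- Basis matrix with a `1` in entry `(i,j)`. -/
def eM {a b : ℕ} (i : Fin a) (j : Fin b) : Fin a → Fin b → ℝ :=
  fun i' j' => if i' = i ∧ j' = j then 1 else 0

/-- Basis vector with a `1` in entry `i`. -/
def eV {a : ℕ} (i : Fin a) : Fin a → ℝ := fun i' => if i' = i then 1 else 0

lemma pdM_eq {a b : ℕ} (L : (Fin a → Fin b → ℝ) → ℝ) (i : Fin a) (j : Fin b)
    (m : Fin a → Fin b → ℝ) :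
    pdM L i j m = deriv (fun t : ℝ => L (m + t • eM i j)) 0 := by
  unfold pdM; congr 1; funext t; congr 1; funext i' j'; simp [eM, mul_ite]

lemma pdV_eq {a : ℕ} (f : (Fin a → ℝ) → ℝ) (i : Fin a) (x : Fin a → ℝ) :
    pdV f i x = deriv (fun t : ℝ => f (x + t • eV i)) 0 := by
  unfold pdV; congr 1; funext t; congr 1; funext i'; simp [eV, mul_ite]

lemma hasDerivAt_line {E : Type*} [NormedAddCommGroup E] [NormedSpace ℝ E]
    (f : E → ℝ) (m v : E) (t : ℝ) (hf : DifferentiableAt ℝ f (m + t • v)) :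
    HasDerivAt (fun s : ℝ => f (m + s • v)) (fderiv ℝ f (m + t • v) v) t := by
  have h1 : HasDerivAt (fun s : ℝ => m + s • v) v t := by
    simpa using ((hasDerivAt_id t).smul_const v).const_add m
  exact (hf.hasFDerivAt.comp_hasDerivAt t h1)

lemma pdM_eq_fderiv {a b : ℕ} (f : (Fin a → Fin b → ℝ) → ℝ) (i : Fin a) (j : Fin b)
    (m : Fin a → Fin b → ℝ) (hf : DifferentiableAt ℝ f m) :
    pdM f i j m = fderiv ℝ f m (eM i j) := by
  rw [pdM_eq]
  have h := hasDerivAt_line f m (eM i j) 0 (by simpa using hf)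
  rw [h.deriv]; simp

/-- Stacking a matrix on top of another. -/
def stk {n r k : ℕ} (q : Fin n → Fin k → ℝ) (w : Fin r → Fin k → ℝ) :
    Fin (n + r) → Fin k → ℝ :=
  fun i => Fin.addCases (motive := fun _ => Fin k → ℝ) (fun A => q A) (fun F => w F) i

lemma stk_castAdd {n r k : ℕ} (q : Fin n → Fin k → ℝ) (w : Fin r → Fin k → ℝ) (A : Fin n) :
    stk q w (Fin.castAdd r A) = q A := by simp [stk]

lemma stk_natAdd {n r k : ℕ} (q : Fin n → Fin k → ℝ) (w : Fin r → Fin k → ℝ) (F : Fin r) :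
    stk q w (Fin.natAdd n F) = w F := by simp [stk]

lemma stk_pert {n r k : ℕ} (q : Fin n → Fin k → ℝ) (w : Fin r → Fin k → ℝ)
    (A : Fin n) (K : Fin k) (t : ℝ) :
    (fun i' j' => stk q w i' j' + (if i' = Fin.castAdd r A ∧ j' = K then t else 0)) =
      stk (fun i' j' => q i' j' + (if i' = A ∧ j' = K then t else 0)) w := by
  funext i j
  refine Fin.addCases (fun B => ?_) (fun F => ?_) i
  · rw [stk_castAdd, stk_castAdd]
    congr 1
    congr 1
    simp [Fin.ext_iff]
  · rw [stk_natAdd, stk_natAdd]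
    have : ¬((Fin.natAdd n F : Fin (n + r)) = Fin.castAdd r A ∧ j = K) := by
      rintro ⟨h, -⟩
      have := congrArg Fin.val h
      simp at this
      omega
    rw [if_neg this, add_zero]

lemma Lst_stk {n r k : ℕ} (L : (Fin n → Fin k → ℝ) → (Fin r → Fin k → ℝ) → ℝ)
    (q : Fin n → Fin k → ℝ) (w : Fin r → Fin k → ℝ) :
    L (fun A => stk q w (Fin.castAdd r A)) (fun F => stk q w (Fin.natAdd n F)) = L q w := by
  congr 1
  · funext A; rw [stk_castAdd]
  · funext F; rw [stk_natAdd]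

lemma pdM_stk {n r k : ℕ} (L : (Fin n → Fin k → ℝ) → (Fin r → Fin k → ℝ) → ℝ)
    (w : Fin r → Fin k → ℝ) (A : Fin n) (K : Fin k) (q : Fin n → Fin k → ℝ) :
    pdM (fun m => L (fun A' => m (Fin.castAdd r A')) (fun F => m (Fin.natAdd n F)))
        (Fin.castAdd r A) K (stk q w) =
      pdM (fun q' => L q' w) A K q := by
  unfold pdM
  congr 1
  funext t
  rw [stk_pert]
  exact Lst_stk L _ w

lemma pdM2_stk {n r k : ℕ} (L : (Fin n → Fin k → ℝ) → (Fin r → Fin k → ℝ) → ℝ)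
    (w : Fin r → Fin k → ℝ) (A B : Fin n) (K M : Fin k) (q : Fin n → Fin k → ℝ) :
    pdM (fun m' => pdM (fun m => L (fun A' => m (Fin.castAdd r A')) (fun F => m (Fin.natAdd n F)))
        (Fin.castAdd r B) M m') (Fin.castAdd r A) K (stk q w) =
      pdM (fun q' => pdM (fun q'' => L q'' w) B M q') A K q := by
  unfold pdM
  congr 1
  funext t
  rw [stk_pert]
  exact pdM_stk L w B M _

lemma fund_restrict {n r k : ℕ} (L : (Fin n → Fin k → ℝ) → (Fin r → Fin k → ℝ) → ℝ)
    (w : Fin r → Fin k → ℝ)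
    (hF : FundEqs (fun m : Fin (n + r) → Fin k → ℝ =>
      L (fun A => m (Fin.castAdd r A)) (fun F => m (Fin.natAdd n F)))) :
    FundEqs (fun q => L q w) := by
  intro i₁ i₂ j₁ j₂ m
  have h := hF (Fin.castAdd r i₁) (Fin.castAdd r i₂) j₁ j₂ (stk m w)
  rwa [pdM2_stk, pdM2_stk] at h

lemma sum_antisymm {k : ℕ} (g : Fin k → ℝ) (f : Fin k → Fin k → ℝ)
    (hf : ∀ K M, f K M = - f M K) : ∑ K, ∑ M, g K * g M * f K M = 0 := by
  have h1 : (∑ K, ∑ M, g K * g M * f K M) = - ∑ K, ∑ M, g K * g M * f M K := by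
    rw [← Finset.sum_neg_distrib]
    refine Finset.sum_congr rfl fun K _ => ?_
    rw [← Finset.sum_neg_distrib]
    refine Finset.sum_congr rfl fun M _ => ?_
    rw [hf K M]; ring
  have h2 : (∑ K, ∑ M, g K * g M * f M K) = ∑ K, ∑ M, g K * g M * f K M := by
    rw [Finset.sum_comm]
    refine Finset.sum_congr rfl fun K _ => Finset.sum_congr rfl fun M _ => by ring
  rw [h2] at h1
  linarith

/-- The key algebraic step: for a smooth function satisfying the fundamental
equations, the relevant weighted sum of partial derivatives is invariant under a
rank-one shift of the base point. -/
lemma key_shift {d k : ℕ} (G : (Fin d → Fin k → ℝ) → ℝ) (hG : ContDiff ℝ (⊤ : ℕ∞) G)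
    (hFE : FundEqs G) (A : Fin d) (w' : Fin k → ℝ) (c : Fin d → ℝ)
    (p : Fin d → Fin k → ℝ) :
    ∑ K, w' K * pdM G A K (p + fun B M => c B * w' M) =
      ∑ K, w' K * pdM G A K p := by
  classical
  have hGd : Differentiable ℝ G := hG.differentiable (by simp)
  have hGf : ContDiff ℝ (⊤ : ℕ∞) (fderiv ℝ G) :=
    hG.fderiv_right (m := (⊤ : ℕ∞)) (by exact_mod_cast le_top.{0})
  have hf' : Differentiable ℝ (fderiv ℝ G) :=
    hGf.differentiable (by simp)
  set v : Fin d → Fin k → ℝ := (fun B M => c B * w' M) with hv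
  set F : Fin k → (Fin d → Fin k → ℝ) → ℝ := fun K q => fderiv ℝ G q (eM A K) with hF
  have hFc : ∀ K, ContDiff ℝ (⊤ : ℕ∞) (F K) := fun K =>
    (ContinuousLinearMap.apply ℝ ℝ (eM A K)).contDiff.comp hGf
  have hFd : ∀ K, Differentiable ℝ (F K) := fun K =>
    (hFc K).differentiable (by simp)
  have hf2 : ∀ (q : Fin d → Fin k → ℝ) (K : Fin k),
      fderiv ℝ (F K) q =
        (ContinuousLinearMap.apply ℝ ℝ (eM A K)).comp (fderiv ℝ (fderiv ℝ G) q) := by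
    intro q K
    exact ((ContinuousLinearMap.apply ℝ ℝ (eM A K)).hasFDerivAt.comp q
      (hf' q).hasFDerivAt).fderiv
  have hT : ∀ (q : Fin d → Fin k → ℝ) (B B' : Fin d) (K M : Fin k),
      pdM (fun q' => pdM G B' K q') B M q =
        fderiv ℝ (fderiv ℝ G) q (eM B M) (eM B' K) := by
    intro q B B' K M
    have h1 : (fun q' => pdM G B' K q') =
        fun q' => (ContinuousLinearMap.apply ℝ ℝ (eM B' K)) (fderiv ℝ G q') := by
      funext q'
      exact pdM_eq_fderiv G B' K q' (hGd q')
    rw [h1]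
    have hd : DifferentiableAt ℝ
        (fun q' => (ContinuousLinearMap.apply ℝ ℝ (eM B' K)) (fderiv ℝ G q')) q :=
      ((ContinuousLinearMap.apply ℝ ℝ (eM B' K)).differentiable.comp hf') q
    rw [pdM_eq_fderiv _ B M q hd]
    have hfd : HasFDerivAt
        (fun q' => (ContinuousLinearMap.apply ℝ ℝ (eM B' K)) (fderiv ℝ G q'))
        ((ContinuousLinearMap.apply ℝ ℝ (eM B' K)).comp (fderiv ℝ (fderiv ℝ G) q)) q :=
      (ContinuousLinearMap.apply ℝ ℝ (eM B' K)).hasFDerivAt.comp q (hf' q).hasFDerivAt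
    rw [hfd.fderiv]; rfl
  have hsymm : ∀ (q u u' : Fin d → Fin k → ℝ),
      fderiv ℝ (fderiv ℝ G) q u u' = fderiv ℝ (fderiv ℝ G) q u' u := fun q u u' =>
    second_derivative_symmetric (fun y => (hGd y).hasFDerivAt) ((hf' q).hasFDerivAt) u u'
  have hanti : ∀ (q : Fin d → Fin k → ℝ) (B : Fin d) (K M : Fin k),
      fderiv ℝ (fderiv ℝ G) q (eM B M) (eM A K) =
        - fderiv ℝ (fderiv ℝ G) q (eM B K) (eM A M) := by
    intro q B K M
    have h1 := hFE B A M K q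
    rw [hT q B A K M, hT q A B K M] at h1
    linarith [hsymm q (eM A M) (eM B K)]
  have vdecomp : v = ∑ B, ∑ M, (c B * w' M) • eM B M := by
    funext B' M'
    simp only [Finset.sum_apply, Pi.smul_apply, smul_eq_mul, eM, mul_ite, mul_one,
      mul_zero, ite_and]
    rw [Finset.sum_comm]
    simp [Finset.sum_ite_eq, hv]
  set h : ℝ → ℝ := fun s => ∑ K, w' K * F K (p + s • v) with hh
  have hds : ∀ s, HasDerivAt h (∑ K, w' K * fderiv ℝ (F K) (p + s • v) v) s := fun s =>
    HasDerivAt.fun_sum fun K _ =>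
      (hasDerivAt_line (F K) p v s ((hFd K) _)).const_mul (w' K)
  have hzero : ∀ s : ℝ, (∑ K, w' K * fderiv ℝ (F K) (p + s • v) v) = 0 := by
    intro s
    have hFKv : ∀ (q : Fin d → Fin k → ℝ) (K : Fin k), fderiv ℝ (F K) q v =
        ∑ B, ∑ M, (c B * w' M) *
          fderiv ℝ (fderiv ℝ G) q (eM B M) (eM A K) := by
      intro q K
      conv_lhs => rw [vdecomp]
      rw [map_sum]
      refine Finset.sum_congr rfl fun B _ => ?_
      rw [map_sum]
      refine Finset.sum_congr rfl fun M _ => ?_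
      rw [_root_.map_smul, smul_eq_mul, hf2]
      simp
    simp_rw [hFKv, Finset.mul_sum]
    rw [Finset.sum_comm]
    have : ∀ B : Fin d, (∑ K, ∑ M, w' K * ((c B * w' M) *
        fderiv ℝ (fderiv ℝ G) (p + s • v) (eM B M) (eM A K))) = 0 := by
      intro B
      have h0 := sum_antisymm w'
        (fun K M => c B * fderiv ℝ (fderiv ℝ G) (p + s • v) (eM B M) (eM A K))
        (fun K M => by beta_reduce; rw [hanti]; ring)
      calc (∑ K, ∑ M, w' K * ((c B * w' M) *
            fderiv ℝ (fderiv ℝ G) (p + s • v) (eM B M) (eM A K)))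
          = ∑ K, ∑ M, w' K * w' M *
            (c B * fderiv ℝ (fderiv ℝ G) (p + s • v) (eM B M) (eM A K)) := by
            refine Finset.sum_congr rfl fun K _ => Finset.sum_congr rfl fun M _ => by ring
        _ = 0 := h0
    simp [this]
  have hdiffh : Differentiable ℝ h := fun s => (hds s).differentiableAt
  have hderiv0 : ∀ s, deriv h s = 0 := fun s => by rw [(hds s).deriv, hzero]
  have hconst : h 1 = h 0 := is_const_of_deriv_eq_zero hdiffh hderiv0 1 0
  have e1 : h 1 = ∑ K, w' K * pdM G A K (p + v) := by
    rw [hh]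
    simp only [one_smul]
    exact Finset.sum_congr rfl fun K _ => by
      rw [pdM_eq_fderiv G A K _ (hGd _)]
  have e0 : h 0 = ∑ K, w' K * pdM G A K p := by
    rw [hh]
    simp only [zero_smul, add_zero]
    exact Finset.sum_congr rfl fun K _ => by
      rw [pdM_eq_fderiv G A K _ (hGd _)]
  rw [← e1, ← e0, hconst]

lemma pdM_prod {n a b : ℕ} (Φ : (Fin n → ℝ) × (Fin a → Fin b → ℝ) → ℝ)
    (x : Fin n → ℝ) (P : Fin a → Fin b → ℝ) (A : Fin a) (K : Fin b)
    (hΦ : DifferentiableAt ℝ Φ (x, P)) :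
    pdM (fun q => Φ (x, q)) A K P = fderiv ℝ Φ (x, P) (0, eM A K) := by
  rw [pdM_eq]
  have hline : HasDerivAt (fun t : ℝ => ((x, P + t • eM A K) :
      (Fin n → ℝ) × (Fin a → Fin b → ℝ))) (0, eM A K) 0 :=
    (hasDerivAt_const (0:ℝ) x).prodMk
      (by simpa using ((hasDerivAt_id (0:ℝ)).smul_const (eM A K)).const_add P)
  have hΦ' : DifferentiableAt ℝ Φ (x, P + (0:ℝ) • eM A K) := by simpa using hΦ
  have hc := hΦ'.hasFDerivAt.comp_hasDerivAt 0 hline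
  rw [show (fun t : ℝ => Φ (x, P + t • eM A K)) =
    Φ ∘ (fun t : ℝ => ((x, P + t • eM A K) :
      (Fin n → ℝ) × (Fin a → Fin b → ℝ))) from rfl, hc.deriv]
  simp

/-- Key analytic step: two parameter matrices giving (on `U`) the same weighted sums
of partial derivatives also give equal weighted sums of `pdV`s. -/
lemma sum_pdV_eq {n a b : ℕ} (U : Set (Fin n → ℝ)) (hU : IsOpen U)
    (Φ : (Fin n → ℝ) × (Fin a → Fin b → ℝ) → ℝ)
    (hΦ : ContDiffOn ℝ (⊤ : ℕ∞) Φ (U ×ˢ (Set.univ : Set (Fin a → Fin b → ℝ))))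
    (x : Fin n → ℝ) (hx : x ∈ U) (A : Fin a) (AV : Fin n) (w' : Fin b → ℝ)
    (P₁ P₂ : Fin a → Fin b → ℝ)
    (heq : ∀ x' ∈ U, (∑ K, w' K * pdM (fun q => Φ (x', q)) A K P₁) =
      ∑ K, w' K * pdM (fun q => Φ (x', q)) A K P₂) :
    (∑ K, w' K * pdV (fun x' => pdM (fun q => Φ (x', q)) A K P₁) AV x) =
    ∑ K, w' K * pdV (fun x' => pdM (fun q => Φ (x', q)) A K P₂) AV x := by
  classical
  have hopen : IsOpen (U ×ˢ (Set.univ : Set (Fin a → Fin b → ℝ))) :=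
    hU.prod isOpen_univ
  have hev : ∀ᶠ t in nhds (0:ℝ), x + t • eV AV ∈ U := by
    have hcont : ContinuousAt (fun t : ℝ => x + t • eV AV) 0 := by fun_prop
    exact hcont.eventually_mem (hU.mem_nhds (by simpa using hx))
  have hth : ∀ P : Fin a → Fin b → ℝ,
      (∑ K, w' K * pdV (fun x' => pdM (fun q => Φ (x', q)) A K P) AV x) =
      deriv (fun t : ℝ => ∑ K, w' K * pdM (fun q => Φ (x + t • eV AV, q)) A K P) 0 := by
    intro P
    have hgd : ∀ K : Fin b, DifferentiableAt ℝ
        (fun t : ℝ => fderiv ℝ Φ (x + t • eV AV, P) ((0 : Fin n → ℝ), eM A K)) 0 := by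
      intro K
      have hmem : ((x + (0:ℝ) • eV AV, P) :
          (Fin n → ℝ) × (Fin a → Fin b → ℝ)) ∈ U ×ˢ Set.univ :=
        ⟨by simpa using hx, Set.mem_univ _⟩
      have hcd : ContDiffAt ℝ (⊤ : ℕ∞) Φ (x + (0:ℝ) • eV AV, P) :=
        hΦ.contDiffAt (hopen.mem_nhds hmem)
      have hfd : ContDiffAt ℝ (⊤ : ℕ∞) (fderiv ℝ Φ) (x + (0:ℝ) • eV AV, P) :=
        hcd.fderiv_right (m := (⊤ : ℕ∞)) (by exact_mod_cast le_top.{0})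
      have hline : DifferentiableAt ℝ (fun t : ℝ => ((x + t • eV AV, P) :
          (Fin n → ℝ) × (Fin a → Fin b → ℝ))) 0 := by fun_prop
      exact ((ContinuousLinearMap.apply ℝ ℝ
          (((0 : Fin n → ℝ), eM A K))).differentiable.differentiableAt).comp 0
        ((hfd.differentiableAt (by simp)).comp 0 hline)
    have hevK : ∀ K : Fin b,
        (fun t : ℝ => pdM (fun q => Φ (x + t • eV AV, q)) A K P) =ᶠ[nhds (0:ℝ)]
        (fun t : ℝ => fderiv ℝ Φ (x + t • eV AV, P) ((0 : Fin n → ℝ), eM A K)) := by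
      intro K
      filter_upwards [hev] with t ht
      refine pdM_prod Φ _ P A K ?_
      exact (hΦ.contDiffAt (hopen.mem_nhds ⟨ht, Set.mem_univ _⟩)).differentiableAt
        (by simp)
    have hdK : ∀ K : Fin b, DifferentiableAt ℝ
        (fun t : ℝ => pdM (fun q => Φ (x + t • eV AV, q)) A K P) 0 := by
      intro K
      exact ((hevK K).differentiableAt_iff).mpr (hgd K)
    have hsum : HasDerivAt
        (fun t : ℝ => ∑ K, w' K * pdM (fun q => Φ (x + t • eV AV, q)) A K P)
        (∑ K, w' K * deriv (fun t : ℝ =>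
          pdM (fun q => Φ (x + t • eV AV, q)) A K P) 0) 0 :=
      HasDerivAt.fun_sum fun K _ => ((hdK K).hasDerivAt).const_mul (w' K)
    calc (∑ K, w' K * pdV (fun x' => pdM (fun q => Φ (x', q)) A K P) AV x)
        = ∑ K, w' K * deriv (fun t : ℝ =>
            pdM (fun q => Φ (x + t • eV AV, q)) A K P) 0 :=
          Finset.sum_congr rfl fun K _ => by rw [pdV_eq]
      _ = deriv (fun t : ℝ => ∑ K, w' K *
            pdM (fun q => Φ (x + t • eV AV, q)) A K P) 0 := hsum.deriv.symm
  rw [hth P₁, hth P₂]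
  apply Filter.EventuallyEq.deriv_eq
  filter_upwards [hev] with t ht
  exact heq _ ht


/-- The differential `Δ𝓛` of an even mixed form `𝓛` of codegree
`k` and additional degree `r` on `U` is admissible:
`Δ𝓛(x, p + a·ŵ, ŵ) = Δ𝓛(x, p, ŵ)` for all `a ∈ Matrix(n×(r+1), ℝ)`. -/
theorem statement_14 (n k r : ℕ) (U : Set (Fin n → ℝ)) (hU : IsOpen U)
    (L : (Fin n → ℝ) → (Fin n → Fin k → ℝ) → (Fin r → Fin k → ℝ) → ℝ)
    (hL : IsMixedForm U L) :
    ∀ x ∈ U, ∀ (p : Fin n → Fin k → ℝ) (what : Fin (r + 1) → Fin k → ℝ)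
        (a : Fin n → Fin (r + 1) → ℝ),
      Dmix L x (p + mmul a what) what = Dmix L x p what := by
  obtain ⟨hsm, hrc, hlc, hadm, hfeq⟩ := hL
  intro x hx p what a
  unfold Dmix
  congr 1
  conv_lhs => rw [Finset.sum_comm]
  conv_rhs => rw [Finset.sum_comm]
  refine Finset.sum_congr rfl fun A _ => ?_
  set w : Fin r → Fin k → ℝ := fun F => what (Fin.castSucc F) with hwdef
  set Φ : (Fin n → ℝ) × (Fin n → Fin k → ℝ) → ℝ := fun z => L z.1 z.2 w with hPhidef
  have hΦ : ContDiffOn ℝ (⊤ : ℕ∞) Φ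
      (U ×ˢ (Set.univ : Set (Fin n → Fin k → ℝ))) := by
    have hmap : ContDiff ℝ (⊤ : ℕ∞)
        (fun z : (Fin n → ℝ) × (Fin n → Fin k → ℝ) => (z.1, (z.2, w))) :=
      contDiff_fst.prodMk (contDiff_snd.prodMk contDiff_const)
    refine hsm.comp hmap.contDiffOn ?_
    intro z hz
    exact ⟨hz.1, Set.mem_univ _⟩
  have hpoint : ∀ x' ∈ U,
      (∑ K, what (Fin.last r) K * pdM (fun q => Φ (x', q)) A K (p + mmul a what)) =
      ∑ K, what (Fin.last r) K * pdM (fun q => Φ (x', q)) A K p := by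
    intro x' hx'
    have hG : ContDiff ℝ (⊤ : ℕ∞) (fun q => Φ (x', q)) := by
      rw [← contDiffOn_univ]
      refine hΦ.comp (contDiff_const.prodMk contDiff_id).contDiffOn ?_
      intro q _
      exact ⟨hx', Set.mem_univ _⟩
    have hFE : FundEqs (fun q => L x' q w) := fund_restrict (L x') w (hfeq x' hx')
    have hdec : p + mmul a what =
        (p + fun B M => a B (Fin.last r) * what (Fin.last r) M) +
          mmul (fun B F => a B (Fin.castSucc F)) w := by
      funext B M
      show p B M + (∑ F : Fin (r + 1), a B F * what F M) =
        (p B M + a B (Fin.last r) * what (Fin.last r) M) +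
          ∑ F : Fin r, a B (Fin.castSucc F) * w F M
      rw [Fin.sum_univ_castSucc]
      simp only [hwdef]
      ring
    rw [hdec]
    have hstep1 : ∀ K : Fin k, pdM (fun q => Φ (x', q)) A K
        ((p + fun B M => a B (Fin.last r) * what (Fin.last r) M) +
          mmul (fun B F => a B (Fin.castSucc F)) w) =
        pdM (fun q => Φ (x', q)) A K
          (p + fun B M => a B (Fin.last r) * what (Fin.last r) M) := by
      intro K
      unfold pdM
      congr 1
      funext t
      have harg : (fun i' j' =>
          ((p + fun B M => a B (Fin.last r) * what (Fin.last r) M) +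
            mmul (fun B F => a B (Fin.castSucc F)) w) i' j' +
            (if i' = A ∧ j' = K then t else 0)) =
        (fun i' j' =>
          (p + fun B M => a B (Fin.last r) * what (Fin.last r) M) i' j' +
            (if i' = A ∧ j' = K then t else 0)) +
          mmul (fun B F => a B (Fin.castSucc F)) w := by
        funext i' j'
        simp only [Pi.add_apply]
        ring
      rw [harg]
      exact hadm x' hx' _ w (fun B F => a B (Fin.castSucc F))
    calc (∑ K, what (Fin.last r) K * pdM (fun q => Φ (x', q)) A K
            ((p + fun B M => a B (Fin.last r) * what (Fin.last r) M) +
              mmul (fun B F => a B (Fin.castSucc F)) w))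
        = ∑ K, what (Fin.last r) K * pdM (fun q => Φ (x', q)) A K
            (p + fun B M => a B (Fin.last r) * what (Fin.last r) M) :=
          Finset.sum_congr rfl fun K _ => by rw [hstep1 K]
      _ = ∑ K, what (Fin.last r) K * pdM (fun q => Φ (x', q)) A K p :=
          key_shift (fun q => L x' q w) hG hFE A (what (Fin.last r))
            (fun B => a B (Fin.last r)) p
  exact sum_pdV_eq U hU Φ hΦ x hx A A (what (Fin.last r)) (p + mmul a what) p hpoint
end
end

section
/- Let U ⊆ ℝⁿ be open and let 𝓛 : U × Matrix(n×k, ℝ) × Matrix(r×k, ℝ) → ℝ be smooth, written 𝓛(x, p, w), satisfying for each fixed x the fundamental equations in the entries of the stacked (n+r)×k matrix (p over w): ∂²𝓛/∂m_{i₁}^{K}∂m_{i₂}^{L} + ∂²𝓛/∂m_{i₂}^{K}∂m_{i₁}^{L} = 0 for all rows i₁, i₂ of the stacked matrix and all columns K, L. Define Δ𝓛(x, p, ŵ) := (−1)^r Σ_{K=1}^{k} Σ_{A=1}^{n} w'^K (∂²𝓛/∂x^A∂p_A^K)(x, p, w), where ŵ ∈ Matrix((r+1)×k, ℝ) has first r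 rows w and last row w'. Then Δ𝓛 satisfies, for each fixed x, the fundamental equations in the entries of the stacked (n+r+1)×k matrix (p over ŵ). -/
open MeasureTheory
open scoped BigOperators

noncomputable section

namespace S15

variable {E : Type*} [NormedAddCommGroup E] [NormedSpace ℝ E]

def DD (v : E) (g : E → ℝ) : E → ℝ := fun q => fderiv ℝ g q v

variable {O : Set E}

lemma diffAt (hO : IsOpen O) {g : E → ℝ} (hg : ContDiffOn ℝ (⊤:ℕ∞) g O) {q : E} (hq : q ∈ O) :
    DifferentiableAt ℝ g q :=
  (hg.contDiffAt (hO.mem_nhds hq)).differentiableAt (by simp)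

lemma contDiffOn_DD (hO : IsOpen O) {g : E → ℝ} (hg : ContDiffOn ℝ (⊤:ℕ∞) g O) (v : E) :
    ContDiffOn ℝ (⊤:ℕ∞) (DD v g) O := by
  have h1 : ContDiffOn ℝ (⊤:ℕ∞) (fderiv ℝ g) O :=
    ((contDiffOn_infty_iff_fderiv_of_isOpen hO).1 hg).2
  exact h1.clm_apply contDiffOn_const

lemma DD_line (hO : IsOpen O) {g : E → ℝ} (hg : ContDiffOn ℝ (⊤:ℕ∞) g O) {q : E} (hq : q ∈ O) (v : E) :
    deriv (fun t : ℝ => g (q + t • v)) 0 = DD v g q := by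
  have hline : HasDerivAt (fun t : ℝ => q + t • v) v 0 := by
    simpa using ((hasDerivAt_id (0:ℝ)).smul_const v).const_add q
  have hgd : HasFDerivAt g (fderiv ℝ g q) (q + (0:ℝ) • v) := by
    simpa using (diffAt hO hg hq).hasFDerivAt
  have := hgd.comp_hasDerivAt (x := (0:ℝ)) hline
  exact this.deriv

lemma DD_congr (hO : IsOpen O) {f g : E → ℝ} (h : ∀ y ∈ O, f y = g y) {q : E} (hq : q ∈ O) (v : E) :
    DD v f q = DD v g q := by
  have : f =ᶠ[nhds q] g := by
    filter_upwards [hO.mem_nhds hq] with y hy using h y hy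
  unfold DD
  rw [this.fderiv_eq]

lemma DD_comm (hO : IsOpen O) {g : E → ℝ} (hg : ContDiffOn ℝ (⊤:ℕ∞) g O) {q : E} (hq : q ∈ O) (u v : E) :
    DD u (DD v g) q = DD v (DD u g) q := by
  have hsym : IsSymmSndFDerivAt ℝ g q :=
    (hg.contDiffAt (hO.mem_nhds hq)).isSymmSndFDerivAt
      (by simpa using WithTop.coe_le_coe.mpr (le_top : (2:ℕ∞) ≤ ⊤))
  have hd : DifferentiableAt ℝ (fderiv ℝ g) q := by
    have := (((contDiffOn_infty_iff_fderiv_of_isOpen hO).1 hg).2).contDiffAt (hO.mem_nhds hq)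
    exact this.differentiableAt (by simp)
  have key : ∀ w : E, ∀ u' : E, DD u' (DD w g) q = fderiv ℝ (fderiv ℝ g) q u' w := by
    intro w u'
    unfold DD
    rw [fderiv_clm_apply hd (differentiableAt_const w)]
    simp
  rw [key v u, key u v, hsym u v]

lemma DD_zero_dir (g : E → ℝ) (q : E) : DD (0:E) g q = 0 := by simp [DD]

lemma DD_zero_fun (v : E) (q : E) : DD v (fun _ => (0:ℝ)) q = 0 := by simp [DD]

lemma DD_add {f g : E → ℝ} {q : E} (hf : DifferentiableAt ℝ f q)
    (hg : DifferentiableAt ℝ g q) (v : E) :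
    DD v (fun y => f y + g y) q = DD v f q + DD v g q := by
  simp [DD, fderiv_fun_add hf hg]

lemma DD_mul {f g : E → ℝ} {q : E} (hf : DifferentiableAt ℝ f q)
    (hg : DifferentiableAt ℝ g q) (v : E) :
    DD v (fun y => f y * g y) q = DD v f q * g q + f q * DD v g q := by
  simp [DD, fderiv_fun_mul hf hg]; ring

lemma DD_const_mul {f : E → ℝ} {q : E} (hf : DifferentiableAt ℝ f q) (c : ℝ) (v : E) :
    DD v (fun y => c * f y) q = c * DD v f q := by
  simp [DD, fderiv_const_mul hf c]

lemma DD_sum {ι : Type*} {s : Finset ι} {f : ι → E → ℝ} {q : E}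
    (hf : ∀ i ∈ s, DifferentiableAt ℝ (f i) q) (v : E) :
    DD v (fun y => ∑ i ∈ s, f i y) q = ∑ i ∈ s, DD v (f i) q := by
  unfold DD
  rw [fderiv_fun_sum hf]
  simp

lemma DD_clm (ℓ : E →L[ℝ] ℝ) (v : E) (q : E) : DD v (fun y => ℓ y) q = ℓ v := by
  simp [DD, ℓ.fderiv]

lemma DD_comp_clm {E' : Type*} [NormedAddCommGroup E'] [NormedSpace ℝ E']
    {f : E' → ℝ} (A : E →L[ℝ] E') {q : E} (hf : DifferentiableAt ℝ f (A q)) (v : E) :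
    DD v (fun y => f (A y)) q = DD (A v) f (A q) := by
  unfold DD
  rw [show (fun y => f (A y)) = f ∘ A from rfl, fderiv_comp q hf A.differentiableAt, A.fderiv]
  simp

/-! ### Specific spaces and directions -/

abbrev Esp (n k s : ℕ) : Type := (Fin n → ℝ) × (Fin n → Fin k → ℝ) × (Fin s → Fin k → ℝ)

variable {n k s : ℕ}

def dmaj (i : Fin (n + s)) (j : Fin k) : Esp n k s :=
  (0, fun A K => if Fin.castAdd s A = i ∧ K = j then 1 else 0,
      fun F K => if Fin.natAdd n F = i ∧ K = j then 1 else 0)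

def exdir (A : Fin n) : Esp n k s := (fun i => if i = A then 1 else 0, 0, 0)

def epdir (A : Fin n) (K : Fin k) : Esp n k s :=
  (0, fun i j => if i = A ∧ j = K then 1 else 0, 0)

lemma epdir_eq_dmaj (A : Fin n) (K : Fin k) :
    (epdir A K : Esp n k s) = dmaj (Fin.castAdd s A) K := by
  unfold epdir dmaj
  refine Prod.ext rfl (Prod.ext ?_ ?_)
  · funext i j
    have : (Fin.castAdd s i = Fin.castAdd s A) ↔ i = A := by
      constructor
      · intro h; exact Fin.ext (by simpa using congrArg Fin.val h)
      · intro h; rw [h]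
    simp only [this]
  · funext F K'
    have : ¬ (Fin.natAdd n F = Fin.castAdd s A) := by
      intro h
      have := congrArg Fin.val h
      simp at this
      omega
    simp [this]

def stackF (x : Fin n → ℝ) (m : Fin (n + s) → Fin k → ℝ) : Esp n k s :=
  (x, fun A => m (Fin.castAdd s A), fun F => m (Fin.natAdd n F))

lemma stack_line (x : Fin n → ℝ) (m : Fin (n + s) → Fin k → ℝ) (i : Fin (n+s)) (j : Fin k) (t : ℝ) :
    stackF x (fun i' j' => m i' j' + (if i' = i ∧ j' = j then t else 0))
      = stackF x m + t • dmaj i j := by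
  unfold stackF dmaj
  refine Prod.ext ?_ (Prod.ext ?_ ?_)
  · simp
  · funext A K
    simp only [Prod.snd_add, Prod.fst_add, Prod.smul_snd, Prod.smul_fst, Pi.add_apply,
      Pi.smul_apply, smul_eq_mul, mul_ite, mul_one, mul_zero]
  · funext F K
    simp only [Prod.snd_add, Prod.smul_snd, Pi.add_apply, Pi.smul_apply, smul_eq_mul,
      mul_ite, mul_one, mul_zero]

variable {U : Set (Fin n → ℝ)}

lemma mem_O {x : Fin n → ℝ} (hx : x ∈ U) (y : (Fin n → Fin k → ℝ) × (Fin s → Fin k → ℝ)) :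
    ((x, y) : Esp n k s) ∈ U ×ˢ (Set.univ : Set ((Fin n → Fin k → ℝ) × (Fin s → Fin k → ℝ))) :=
  ⟨hx, trivial⟩

lemma pdM_stack (hU : IsOpen U) {W : Esp n k s → ℝ}
    (hW : ContDiffOn ℝ (⊤:ℕ∞) W (U ×ˢ Set.univ)) {x : Fin n → ℝ} (hx : x ∈ U)
    (i : Fin (n+s)) (j : Fin k) (m : Fin (n + s) → Fin k → ℝ) :
    pdM (fun m' => W (stackF x m')) i j m = DD (dmaj i j) W (stackF x m) := by
  have hO : IsOpen (U ×ˢ (Set.univ : Set ((Fin n → Fin k → ℝ) × (Fin s → Fin k → ℝ)))) :=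
    hU.prod isOpen_univ
  unfold pdM
  have : (fun t : ℝ => W (stackF x (fun i' j' => m i' j' + (if i' = i ∧ j' = j then t else 0))))
      = fun t : ℝ => W (stackF x m + t • dmaj i j) := by
    funext t; rw [stack_line]
  rw [this]
  exact DD_line hO hW (mem_O hx _) _

lemma pdM2_stack (hU : IsOpen U) {W : Esp n k s → ℝ}
    (hW : ContDiffOn ℝ (⊤:ℕ∞) W (U ×ˢ Set.univ)) {x : Fin n → ℝ} (hx : x ∈ U)
    (i₁ i₂ : Fin (n+s)) (j₁ j₂ : Fin k) (m : Fin (n + s) → Fin k → ℝ) :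
    pdM (fun m' => pdM (fun m'' => W (stackF x m'')) i₂ j₂ m') i₁ j₁ m
      = DD (dmaj i₁ j₁) (DD (dmaj i₂ j₂) W) (stackF x m) := by
  have hO : IsOpen (U ×ˢ (Set.univ : Set ((Fin n → Fin k → ℝ) × (Fin s → Fin k → ℝ)))) :=
    hU.prod isOpen_univ
  have h1 : (fun m' => pdM (fun m'' => W (stackF x m'')) i₂ j₂ m')
      = fun m' => (DD (dmaj i₂ j₂) W) (stackF x m') := by
    funext m'; exact pdM_stack hU hW hx i₂ j₂ m'
  rw [h1]
  exact pdM_stack hU (contDiffOn_DD hO hW _) hx i₁ j₁ m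

lemma pdM_p_slice (hU : IsOpen U) {W : Esp n k s → ℝ}
    (hW : ContDiffOn ℝ (⊤:ℕ∞) W (U ×ˢ Set.univ)) {x : Fin n → ℝ} (hx : x ∈ U)
    (p : Fin n → Fin k → ℝ) (w : Fin s → Fin k → ℝ) (A : Fin n) (K : Fin k) :
    pdM (fun p' => W (x, p', w)) A K p = DD (epdir A K) W (x, p, w) := by
  have hO : IsOpen (U ×ˢ (Set.univ : Set ((Fin n → Fin k → ℝ) × (Fin s → Fin k → ℝ)))) :=
    hU.prod isOpen_univ
  unfold pdM
  have : (fun t : ℝ => W (x, (fun i' j' => p i' j' + (if i' = A ∧ j' = K then t else 0)), w))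
      = fun t : ℝ => W ((x, p, w) + t • epdir A K) := by
    funext t
    congr 1
    refine Prod.ext (by simp [epdir]) (Prod.ext ?_ (by simp [epdir]))
    funext i' j'
    simp only [epdir, Prod.snd_add, Prod.fst_add, Prod.smul_snd, Prod.smul_fst, Pi.add_apply,
      Pi.smul_apply, smul_eq_mul, mul_ite, mul_one, mul_zero]
  rw [this]
  exact DD_line hO hW (mem_O hx _) _

lemma pdV_x_slice (hU : IsOpen U) {W : Esp n k s → ℝ}
    (hW : ContDiffOn ℝ (⊤:ℕ∞) W (U ×ˢ Set.univ)) {x : Fin n → ℝ} (hx : x ∈ U)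
    {p : Fin n → Fin k → ℝ} {w : Fin s → Fin k → ℝ} {h : (Fin n → ℝ) → ℝ}
    (hh : ∀ x' ∈ U, h x' = W (x', p, w)) (A : Fin n) :
    pdV h A x = DD (exdir A) W (x, p, w) := by
  have hO : IsOpen (U ×ˢ (Set.univ : Set ((Fin n → Fin k → ℝ) × (Fin s → Fin k → ℝ)))) :=
    hU.prod isOpen_univ
  unfold pdV
  have hx' : ∀ t : ℝ, (fun i' => x i' + (if i' = A then t else 0))
      = ((x, p, w) + t • (exdir A : Esp n k s)).1 := by
    intro t
    funext i'
    simp only [exdir, Prod.fst_add, Prod.smul_fst, Pi.add_apply, Pi.smul_apply, smul_eq_mul,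
      mul_ite, mul_one, mul_zero]
  have hev : (fun t : ℝ => h (fun i' => x i' + (if i' = A then t else 0)))
      =ᶠ[nhds 0] fun t : ℝ => W ((x, p, w) + t • exdir A) := by
    have hcont : Continuous (fun t : ℝ => (fun i' => x i' + (if i' = A then t else 0))) := by
      apply continuous_pi
      intro i'
      by_cases hi : i' = A <;> simp [hi] <;> continuity
    have hU0 : (fun t : ℝ => (fun i' => x i' + (if i' = A then t else 0))) ⁻¹' U ∈ nhds (0:ℝ) := by
      apply hcont.continuousAt.preimage_mem_nhds
      simpa using hU.mem_nhds hx
    filter_upwards [hU0] with t ht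
    rw [hh _ ht]
    congr 1
    refine Prod.ext (hx' t) (Prod.ext (by simp [exdir]) (by simp [exdir]))
  rw [hev.deriv_eq]
  exact DD_line hO hW (mem_O hx _) _



variable {n k s r : ℕ}

def piE (n k s : ℕ) : Esp n k (s+1) →L[ℝ] Esp n k s :=
  (ContinuousLinearMap.fst ℝ _ _).prod
    (((ContinuousLinearMap.fst ℝ _ _).comp (ContinuousLinearMap.snd ℝ _ _)).prod
      ((ContinuousLinearMap.pi
          (fun F : Fin s => ContinuousLinearMap.proj (R := ℝ) (Fin.castSucc F))).comp
        ((ContinuousLinearMap.snd ℝ _ _).comp (ContinuousLinearMap.snd ℝ _ _))))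

@[simp] lemma piE_apply (q : Esp n k (s+1)) :
    piE n k s q = (q.1, q.2.1, fun F => q.2.2 (Fin.castSucc F)) := rfl

def ellE (n k s : ℕ) (K : Fin k) : Esp n k (s+1) →L[ℝ] ℝ :=
  (ContinuousLinearMap.proj (R := ℝ) (φ := fun _ : Fin k => ℝ) K).comp
    ((ContinuousLinearMap.proj (R := ℝ) (φ := fun _ : Fin (s+1) => Fin k → ℝ) (Fin.last s)).comp
      ((ContinuousLinearMap.snd ℝ (Fin n → Fin k → ℝ) (Fin (s+1) → Fin k → ℝ)).comp
        (ContinuousLinearMap.snd ℝ (Fin n → ℝ)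
          ((Fin n → Fin k → ℝ) × (Fin (s+1) → Fin k → ℝ)))))

@[simp] lemma ellE_apply (K : Fin k) (q : Esp n k (s+1)) :
    ellE n k s K q = q.2.2 (Fin.last s) K := rfl

variable (L : (Fin n → ℝ) → (Fin n → Fin k → ℝ) → (Fin r → Fin k → ℝ) → ℝ)

def Ffun : Esp n k r → ℝ := fun q => L q.1 q.2.1 q.2.2

def Hfun (A : Fin n) (K : Fin k) : Esp n k r → ℝ :=
  DD (exdir A) (DD (epdir A K) (Ffun L))

def Gfun : Esp n k (r+1) → ℝ :=
  fun q => (-1:ℝ)^r * ∑ K, ∑ A, ellE n k r K q * Hfun L A K (piE n k r q)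

variable {U : Set (Fin n → ℝ)}

lemma Hfun_smooth (hU : IsOpen U) (hL : ContDiffOn ℝ (⊤:ℕ∞) (Ffun L) (U ×ˢ Set.univ)) :
    ∀ (A : Fin n) (K : Fin k), ContDiffOn ℝ (⊤:ℕ∞) (Hfun L A K) (U ×ˢ Set.univ) :=
  fun A K => contDiffOn_DD (hU.prod isOpen_univ) (contDiffOn_DD (hU.prod isOpen_univ) hL _) _

lemma piE_mapsTo :
    Set.MapsTo (piE n k r)
      (U ×ˢ (Set.univ : Set ((Fin n → Fin k → ℝ) × (Fin (r+1) → Fin k → ℝ))))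
      (U ×ˢ (Set.univ : Set ((Fin n → Fin k → ℝ) × (Fin r → Fin k → ℝ)))) := by
  intro q hq
  exact ⟨hq.1, trivial⟩

lemma Hpi_smooth (hU : IsOpen U) (hL : ContDiffOn ℝ (⊤:ℕ∞) (Ffun L) (U ×ˢ Set.univ))
    (A : Fin n) (K : Fin k) :
    ContDiffOn ℝ (⊤:ℕ∞) (fun q => Hfun L A K (piE n k r q)) (U ×ˢ Set.univ) :=
  (Hfun_smooth L hU hL A K).comp ((piE n k r).contDiff.contDiffOn) piE_mapsTo

lemma Gfun_smooth (hU : IsOpen U) (hL : ContDiffOn ℝ (⊤:ℕ∞) (Ffun L) (U ×ˢ Set.univ)) :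
    ContDiffOn ℝ (⊤:ℕ∞) (Gfun L) (U ×ˢ Set.univ) := by
  unfold Gfun
  apply ContDiffOn.mul contDiffOn_const
  apply ContDiffOn.sum; intro K _
  apply ContDiffOn.sum; intro A _
  exact ((ellE n k r K).contDiff.contDiffOn).mul (Hpi_smooth L hU hL A K)

lemma Dmix_eq_Gfun (hU : IsOpen U) (hL : ContDiffOn ℝ (⊤:ℕ∞) (Ffun L) (U ×ˢ Set.univ))
    {x : Fin n → ℝ} (hx : x ∈ U) (p : Fin n → Fin k → ℝ) (what : Fin (r+1) → Fin k → ℝ) :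
    Dmix L x p what = Gfun L (x, p, what) := by
  have hO : IsOpen (U ×ˢ (Set.univ : Set ((Fin n → Fin k → ℝ) × (Fin r → Fin k → ℝ)))) :=
    hU.prod isOpen_univ
  unfold Dmix Gfun
  congr 1
  apply Finset.sum_congr rfl; intro K _
  apply Finset.sum_congr rfl; intro A _
  simp only [ellE_apply, piE_apply]
  congr 1
  exact pdV_x_slice hU (contDiffOn_DD hO hL _) hx
    (fun x' hx' => pdM_p_slice hU hL hx' p _ A K) A

lemma DG (hU : IsOpen U) (hL : ContDiffOn ℝ (⊤:ℕ∞) (Ffun L) (U ×ˢ Set.univ))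
    {q : Esp n k (r+1)} (hq : q ∈ U ×ˢ Set.univ) (v : Esp n k (r+1)) :
    DD v (Gfun L) q = (-1:ℝ)^r * ∑ K, ∑ A,
      (ellE n k r K v * Hfun L A K (piE n k r q)
        + ellE n k r K q * DD (piE n k r v) (Hfun L A K) (piE n k r q)) := by
  have hO : IsOpen (U ×ˢ (Set.univ : Set ((Fin n → Fin k → ℝ) × (Fin r → Fin k → ℝ)))) :=
    hU.prod isOpen_univ
  have hO2 : IsOpen (U ×ˢ (Set.univ : Set ((Fin n → Fin k → ℝ) × (Fin (r+1) → Fin k → ℝ)))) :=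
    hU.prod isOpen_univ
  have hdiffHπ : ∀ (A : Fin n) (K : Fin k),
      DifferentiableAt ℝ (fun y => Hfun L A K (piE n k r y)) q :=
    fun A K => diffAt hO2 (Hpi_smooth L hU hL A K) hq
  have hterm : ∀ (K : Fin k) (A : Fin n),
      DifferentiableAt ℝ (fun y => ellE n k r K y * Hfun L A K (piE n k r y)) q :=
    fun K A => ((ellE n k r K).differentiableAt).mul (hdiffHπ A K)
  have hKsum : ∀ K : Fin k,
      DifferentiableAt ℝ (fun y => ∑ A, ellE n k r K y * Hfun L A K (piE n k r y)) q :=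
    fun K => DifferentiableAt.fun_sum (fun A _ => hterm K A)
  unfold Gfun
  rw [DD_const_mul (DifferentiableAt.fun_sum fun K _ => hKsum K)]
  rw [DD_sum (fun K _ => hKsum K)]
  congr 1
  apply Finset.sum_congr rfl; intro K _
  rw [DD_sum (fun A _ => hterm K A)]
  apply Finset.sum_congr rfl; intro A _
  rw [DD_mul ((ellE n k r K).differentiableAt) (hdiffHπ A K)]
  rw [DD_clm (ellE n k r K)]
  rw [DD_comp_clm (piE n k r) (diffAt hO (Hfun_smooth L hU hL A K) (piE_mapsTo hq))]

lemma DDG (hU : IsOpen U) (hL : ContDiffOn ℝ (⊤:ℕ∞) (Ffun L) (U ×ˢ Set.univ))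
    {q : Esp n k (r+1)} (hq : q ∈ U ×ˢ Set.univ) (u v : Esp n k (r+1)) :
    DD u (DD v (Gfun L)) q = (-1:ℝ)^r * ∑ K, ∑ A,
      (ellE n k r K v * DD (piE n k r u) (Hfun L A K) (piE n k r q)
        + (ellE n k r K u * DD (piE n k r v) (Hfun L A K) (piE n k r q)
          + ellE n k r K q * DD (piE n k r u)
              (DD (piE n k r v) (Hfun L A K)) (piE n k r q))) := by
  have hO : IsOpen (U ×ˢ (Set.univ : Set ((Fin n → Fin k → ℝ) × (Fin r → Fin k → ℝ)))) :=
    hU.prod isOpen_univ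
  have hO2 : IsOpen (U ×ˢ (Set.univ : Set ((Fin n → Fin k → ℝ) × (Fin (r+1) → Fin k → ℝ)))) :=
    hU.prod isOpen_univ
  have hDHπ_smooth : ∀ (A : Fin n) (K : Fin k),
      ContDiffOn ℝ (⊤:ℕ∞) (fun y => DD (piE n k r v) (Hfun L A K) (piE n k r y))
        (U ×ˢ Set.univ) :=
    fun A K => (contDiffOn_DD hO (Hfun_smooth L hU hL A K) _).comp
      ((piE n k r).contDiff.contDiffOn) piE_mapsTo
  have hdiffHπ : ∀ (A : Fin n) (K : Fin k),
      DifferentiableAt ℝ (fun y => Hfun L A K (piE n k r y)) q :=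
    fun A K => diffAt hO2 (Hpi_smooth L hU hL A K) hq
  have hdiffDHπ : ∀ (A : Fin n) (K : Fin k),
      DifferentiableAt ℝ (fun y => DD (piE n k r v) (Hfun L A K) (piE n k r y)) q :=
    fun A K => diffAt hO2 (hDHπ_smooth A K) hq
  have hterm1 : ∀ (K : Fin k) (A : Fin n),
      DifferentiableAt ℝ (fun y => ellE n k r K v * Hfun L A K (piE n k r y)) q :=
    fun K A => (hdiffHπ A K).const_mul _
  have hterm2 : ∀ (K : Fin k) (A : Fin n),
      DifferentiableAt ℝ
        (fun y => ellE n k r K y * DD (piE n k r v) (Hfun L A K) (piE n k r y)) q :=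
    fun K A => ((ellE n k r K).differentiableAt).mul (hdiffDHπ A K)
  have htermsum : ∀ (K : Fin k) (A : Fin n),
      DifferentiableAt ℝ (fun y => ellE n k r K v * Hfun L A K (piE n k r y)
        + ellE n k r K y * DD (piE n k r v) (Hfun L A K) (piE n k r y)) q :=
    fun K A => (hterm1 K A).add (hterm2 K A)
  have hKsum : ∀ K : Fin k,
      DifferentiableAt ℝ (fun y => ∑ A, (ellE n k r K v * Hfun L A K (piE n k r y)
        + ellE n k r K y * DD (piE n k r v) (Hfun L A K) (piE n k r y))) q :=
    fun K => DifferentiableAt.fun_sum (fun A _ => htermsum K A)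
  have h1 := DD_congr hO2 (fun y hy => DG L hU hL hy v) hq u
  rw [h1]
  rw [DD_const_mul (DifferentiableAt.fun_sum fun K _ => hKsum K)]
  rw [DD_sum (fun K _ => hKsum K)]
  congr 1
  apply Finset.sum_congr rfl; intro K _
  rw [DD_sum (fun A _ => htermsum K A)]
  apply Finset.sum_congr rfl; intro A _
  rw [DD_add (hterm1 K A) (hterm2 K A)]
  congr 1
  · rw [DD_const_mul (hdiffHπ A K)]
    rw [DD_comp_clm (piE n k r) (diffAt hO (Hfun_smooth L hU hL A K) (piE_mapsTo hq))]
  · rw [DD_mul ((ellE n k r K).differentiableAt) (hdiffDHπ A K)]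
    rw [DD_clm (ellE n k r K)]
    rw [DD_comp_clm (piE n k r)
      (diffAt hO (contDiffOn_DD hO (Hfun_smooth L hU hL A K) _) (piE_mapsTo hq))]

section Reorder

variable {E : Type*} [NormedAddCommGroup E] [NormedSpace ℝ E] {O : Set E}

lemma DD_reorder4 (hO : IsOpen O) {g : E → ℝ} (hg : ContDiffOn ℝ (⊤:ℕ∞) g O)
    (a b e p : E) {q : E} (hq : q ∈ O) :
    DD a (DD b (DD e (DD p g))) q = DD e (DD p (DD a (DD b g))) q := by
  have hpg := contDiffOn_DD hO hg p
  have hbg := contDiffOn_DD hO hg b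
  have hbpg := contDiffOn_DD hO hpg b
  have hepg := contDiffOn_DD hO hpg e
  have hbg' := contDiffOn_DD hO hbg p  -- DD p (DD b g)
  -- step 1 : swap b and e inside, under DD a
  have s1 : DD a (DD b (DD e (DD p g))) q = DD a (DD e (DD b (DD p g))) q :=
    DD_congr hO (fun y hy => DD_comm hO hpg hy b e) hq a
  -- step 2 : swap a and e
  have s2 : DD a (DD e (DD b (DD p g))) q = DD e (DD a (DD b (DD p g))) q :=
    DD_comm hO hbpg hq a e
  -- step 3 : inside DD e, rewrite DD a (DD b (DD p g)) = DD p (DD a (DD b g)) on O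
  have s3 : ∀ y ∈ O, DD a (DD b (DD p g)) y = DD p (DD a (DD b g)) y := by
    intro y hy
    have t1 : DD a (DD b (DD p g)) y = DD a (DD p (DD b g)) y :=
      DD_congr hO (fun z hz => DD_comm hO hg hz b p) hy a
    have t2 : DD a (DD p (DD b g)) y = DD p (DD a (DD b g)) y :=
      DD_comm hO (contDiffOn_DD hO hg b) hy a p
    rw [t1, t2]
  rw [s1, s2]
  exact DD_congr hO s3 hq e

lemma DD_add_zero (hO : IsOpen O) {f₁ f₂ : E → ℝ}
    (h₁ : ContDiffOn ℝ (⊤:ℕ∞) f₁ O) (h₂ : ContDiffOn ℝ (⊤:ℕ∞) f₂ O)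
    (hsum : ∀ y ∈ O, f₁ y + f₂ y = 0) {q : E} (hq : q ∈ O) (e p : E) :
    DD e (DD p f₁) q + DD e (DD p f₂) q = 0 := by
  have hDp1 := contDiffOn_DD hO h₁ p
  have hDp2 := contDiffOn_DD hO h₂ p
  have key : ∀ y ∈ O, DD p f₁ y + DD p f₂ y = 0 := by
    intro y hy
    have : DD p f₁ y + DD p f₂ y = DD p (fun z => f₁ z + f₂ z) y :=
      (DD_add (diffAt hO h₁ hy) (diffAt hO h₂ hy) p).symm
    rw [this, DD_congr hO (fun z hz => hsum z hz) hy p, DD_zero_fun]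
  have : DD e (DD p f₁) q + DD e (DD p f₂) q
      = DD e (fun y => DD p f₁ y + DD p f₂ y) q :=
    (DD_add (diffAt hO hDp1 hq) (diffAt hO hDp2 hq) e).symm
  rw [this, DD_congr hO key hq e, DD_zero_fun]

lemma DD_of_DD_zero_dir (hO : IsOpen O) {h : E → ℝ} (a : E) {q : E} (hq : q ∈ O) :
    DD a (DD (0:E) h) q = 0 := by
  rw [DD_congr hO (fun y _ => DD_zero_dir h y) hq a, DD_zero_fun]

end Reorder

variable (hU : IsOpen U)

lemma claimI (hU : IsOpen U) (hL : ContDiffOn ℝ (⊤:ℕ∞) (Ffun L) (U ×ˢ Set.univ))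
    (hf2 : ∀ q ∈ (U ×ˢ Set.univ : Set (Esp n k r)), ∀ (i₁ i₂ : Fin (n+r)) (j₁ j₂ : Fin k),
      DD (dmaj i₁ j₁) (DD (dmaj i₂ j₂) (Ffun L)) q
        + DD (dmaj i₂ j₁) (DD (dmaj i₁ j₂) (Ffun L)) q = 0)
    {q : Esp n k r} (hq : q ∈ U ×ˢ Set.univ)
    (ι₁ ι₂ : Fin (n+r)) (j₁ j₂ : Fin k) (A : Fin n) (K : Fin k) :
    DD (dmaj ι₁ j₁) (DD (dmaj ι₂ j₂) (Hfun L A K)) q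
      + DD (dmaj ι₂ j₁) (DD (dmaj ι₁ j₂) (Hfun L A K)) q = 0 := by
  have hO : IsOpen (U ×ˢ (Set.univ : Set ((Fin n → Fin k → ℝ) × (Fin r → Fin k → ℝ)))) :=
    hU.prod isOpen_univ
  have r1 : DD (dmaj ι₁ j₁) (DD (dmaj ι₂ j₂) (Hfun L A K)) q
      = DD (exdir A) (DD (epdir A K) (DD (dmaj ι₁ j₁) (DD (dmaj ι₂ j₂) (Ffun L)))) q :=
    DD_reorder4 hO hL _ _ _ _ hq
  have r2 : DD (dmaj ι₂ j₁) (DD (dmaj ι₁ j₂) (Hfun L A K)) q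
      = DD (exdir A) (DD (epdir A K) (DD (dmaj ι₂ j₁) (DD (dmaj ι₁ j₂) (Ffun L)))) q :=
    DD_reorder4 hO hL _ _ _ _ hq
  rw [r1, r2]
  exact DD_add_zero hO
    (contDiffOn_DD hO (contDiffOn_DD hO hL _) _)
    (contDiffOn_DD hO (contDiffOn_DD hO hL _) _)
    (fun y hy => hf2 y hy ι₁ ι₂ j₁ j₂) hq _ _

lemma claimII (hU : IsOpen U) (hL : ContDiffOn ℝ (⊤:ℕ∞) (Ffun L) (U ×ˢ Set.univ))
    (hf2 : ∀ q ∈ (U ×ˢ Set.univ : Set (Esp n k r)), ∀ (i₁ i₂ : Fin (n+r)) (j₁ j₂ : Fin k),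
      DD (dmaj i₁ j₁) (DD (dmaj i₂ j₂) (Ffun L)) q
        + DD (dmaj i₂ j₁) (DD (dmaj i₁ j₂) (Ffun L)) q = 0)
    {q : Esp n k r} (hq : q ∈ U ×ˢ Set.univ)
    (ι : Fin (n+r)) (j₁ j₂ : Fin k) (A : Fin n) :
    DD (dmaj ι j₁) (Hfun L A j₂) q + DD (dmaj ι j₂) (Hfun L A j₁) q = 0 := by
  have hO : IsOpen (U ×ˢ (Set.univ : Set ((Fin n → Fin k → ℝ) × (Fin r → Fin k → ℝ)))) :=
    hU.prod isOpen_univ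
  have hpF : ∀ K : Fin k, ContDiffOn ℝ (⊤:ℕ∞) (DD (epdir A K) (Ffun L)) (U ×ˢ Set.univ) :=
    fun K => contDiffOn_DD hO hL _
  have r1 : DD (dmaj ι j₁) (Hfun L A j₂) q
      = DD (exdir A) (DD (dmaj ι j₁) (DD (epdir A j₂) (Ffun L))) q :=
    DD_comm hO (hpF j₂) hq _ _
  have r2 : DD (dmaj ι j₂) (Hfun L A j₁) q
      = DD (exdir A) (DD (dmaj ι j₂) (DD (epdir A j₁) (Ffun L))) q :=
    DD_comm hO (hpF j₁) hq _ _
  rw [r1, r2]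
  -- rewrite DD e X + DD e Y = DD e (X + Y) and use fund eqs
  have hX : ContDiffOn ℝ (⊤:ℕ∞) (DD (dmaj ι j₁) (DD (epdir A j₂) (Ffun L))) (U ×ˢ Set.univ) :=
    contDiffOn_DD hO (hpF j₂) _
  have hY : ContDiffOn ℝ (⊤:ℕ∞) (DD (dmaj ι j₂) (DD (epdir A j₁) (Ffun L))) (U ×ˢ Set.univ) :=
    contDiffOn_DD hO (hpF j₁) _
  have hsum : ∀ y ∈ (U ×ˢ Set.univ : Set (Esp n k r)),
      DD (dmaj ι j₁) (DD (epdir A j₂) (Ffun L)) y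
        + DD (dmaj ι j₂) (DD (epdir A j₁) (Ffun L)) y = 0 := by
    intro y hy
    have swap : DD (dmaj ι j₂) (DD (epdir A j₁) (Ffun L)) y
        = DD (dmaj (Fin.castAdd r A) j₁) (DD (dmaj ι j₂) (Ffun L)) y := by
      rw [epdir_eq_dmaj]
      exact DD_comm hO hL hy _ _
    rw [swap, epdir_eq_dmaj]
    exact hf2 y hy ι (Fin.castAdd r A) j₁ j₂
  have : DD (exdir A) (DD (dmaj ι j₁) (DD (epdir A j₂) (Ffun L))) q
      + DD (exdir A) (DD (dmaj ι j₂) (DD (epdir A j₁) (Ffun L))) q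
      = DD (exdir A) (fun y => DD (dmaj ι j₁) (DD (epdir A j₂) (Ffun L)) y
          + DD (dmaj ι j₂) (DD (epdir A j₁) (Ffun L)) y) q :=
    (DD_add (diffAt hO hX hq) (diffAt hO hY hq) _).symm
  rw [this, DD_congr (hU.prod isOpen_univ) hsum hq _, DD_zero_fun]

section Rows

variable {n k r : ℕ}

lemma piE_dmaj_cast (A₀ : Fin n) (j : Fin k) :
    piE n k r (dmaj (Fin.castAdd (r+1) A₀) j) = dmaj (Fin.castAdd r A₀) j := by
  simp only [piE_apply]
  unfold dmaj
  refine Prod.ext rfl (Prod.ext ?_ ?_)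
  · funext a b
    refine if_congr (and_congr_left fun _ => ?_) rfl rfl
    simp [Fin.ext_iff]
  · funext a b
    refine if_congr (and_congr_left fun _ => ?_) rfl rfl
    have h1 := a.isLt
    have h2 := A₀.isLt
    simp only [Fin.ext_iff, Fin.coe_natAdd, Fin.coe_castSucc, Fin.coe_castAdd] <;> omega

lemma piE_dmaj_mid (G₀ : Fin r) (j : Fin k) :
    piE n k r (dmaj (Fin.natAdd n (Fin.castSucc G₀)) j) = dmaj (Fin.natAdd n G₀) j := by
  simp only [piE_apply]
  unfold dmaj
  refine Prod.ext rfl (Prod.ext ?_ ?_)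
  · funext a b
    refine if_congr (and_congr_left fun _ => ?_) rfl rfl
    have h1 := a.isLt
    simp only [Fin.ext_iff, Fin.coe_natAdd, Fin.coe_castSucc, Fin.coe_castAdd] <;> omega
  · funext a b
    refine if_congr (and_congr_left fun _ => ?_) rfl rfl
    simp [Fin.ext_iff]

lemma piE_dmaj_last (j : Fin k) :
    piE n k r (dmaj (Fin.natAdd n (Fin.last r)) j) = 0 := by
  simp only [piE_apply]
  unfold dmaj
  refine Prod.ext rfl (Prod.ext ?_ ?_)
  · funext a b
    have h1 := a.isLt
    have hne : ¬ (Fin.castAdd (r+1) a = Fin.last (n + r)) := by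
      simp only [Fin.ext_iff, Fin.val_last, Fin.coe_castAdd]
      omega
    simp [hne]
  · funext a b
    have h1 := a.isLt
    have hne : ¬ (Fin.natAdd n (Fin.castSucc a) = Fin.last (n + r)) := by
      simp only [Fin.ext_iff, Fin.coe_natAdd, Fin.coe_castSucc, Fin.val_last]
      omega
    simp [hne]

lemma ellE_dmaj_cast (K : Fin k) (A₀ : Fin n) (j : Fin k) :
    ellE n k r K (dmaj (Fin.castAdd (r+1) A₀) j) = 0 := by
  simp only [ellE_apply]
  unfold dmaj
  have h2 := A₀.isLt
  have hne : ¬ (Fin.last (n + r) = Fin.castAdd (r+1) A₀) := by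
    simp only [Fin.ext_iff, Fin.val_last, Fin.coe_castAdd]
    omega
  simp [hne]

lemma ellE_dmaj_mid (K : Fin k) (G₀ : Fin r) (j : Fin k) :
    ellE n k r K (dmaj (Fin.natAdd n (Fin.castSucc G₀)) j) = 0 := by
  simp only [ellE_apply]
  unfold dmaj
  have h1 := G₀.isLt
  have hne : ¬ (Fin.last (n + r) = Fin.natAdd n (Fin.castSucc G₀)) := by
    simp only [Fin.ext_iff, Fin.coe_natAdd, Fin.coe_castSucc, Fin.val_last]
    omega
  simp [hne]

lemma ellE_dmaj_last (K : Fin k) (j : Fin k) :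
    ellE n k r K (dmaj (Fin.natAdd n (Fin.last r)) j) = if K = j then 1 else 0 := by
  simp only [ellE_apply]
  unfold dmaj
  simp

lemma row_cases (i : Fin (n + (r+1))) :
    (∃ ι : Fin (n+r), (∀ j : Fin k, piE n k r (dmaj i j) = dmaj ι j)
        ∧ (∀ (K j : Fin k), ellE n k r K (dmaj i j) = 0))
    ∨ ((∀ j : Fin k, piE n k r (dmaj i j) = 0)
        ∧ (∀ (K j : Fin k), ellE n k r K (dmaj i j) = if K = j then 1 else 0)) := by
  induction i using Fin.addCases with
  | left A₀ =>
      exact Or.inl ⟨Fin.castAdd r A₀, fun j => piE_dmaj_cast A₀ j, fun K j => ellE_dmaj_cast K A₀ j⟩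
  | right F₀ =>
      induction F₀ using Fin.lastCases with
      | last =>
          exact Or.inr ⟨fun j => piE_dmaj_last j, fun K j => ellE_dmaj_last K j⟩
      | cast G₀ =>
          exact Or.inl ⟨Fin.natAdd n G₀, fun j => piE_dmaj_mid G₀ j, fun K j => ellE_dmaj_mid K G₀ j⟩

end Rows

theorem statement_15_aux (n k r : ℕ) (U : Set (Fin n → ℝ)) (hU : IsOpen U)
    (L : (Fin n → ℝ) → (Fin n → Fin k → ℝ) → (Fin r → Fin k → ℝ) → ℝ)
    (hL : ContDiffOn ℝ (⊤ : ℕ∞)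
      (fun q : (Fin n → ℝ) × (Fin n → Fin k → ℝ) × (Fin r → Fin k → ℝ) =>
        L q.1 q.2.1 q.2.2)
      (U ×ˢ (Set.univ : Set ((Fin n → Fin k → ℝ) × (Fin r → Fin k → ℝ)))))
    (hfund : ∀ x ∈ U, FundEqs (fun m : Fin (n + r) → Fin k → ℝ =>
      L x (fun A => m (Fin.castAdd r A)) (fun F => m (Fin.natAdd n F)))) :
    ∀ x ∈ U, FundEqs (fun m : Fin (n + (r + 1)) → Fin k → ℝ =>
      Dmix L x (fun A => m (Fin.castAdd (r + 1) A)) (fun F => m (Fin.natAdd n F))) := by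
  have hO : IsOpen (U ×ˢ (Set.univ : Set ((Fin n → Fin k → ℝ) × (Fin r → Fin k → ℝ)))) :=
    hU.prod isOpen_univ
  have hO2 : IsOpen (U ×ˢ (Set.univ : Set ((Fin n → Fin k → ℝ) × (Fin (r+1) → Fin k → ℝ)))) :=
    hU.prod isOpen_univ
  have hLF : ContDiffOn ℝ (⊤:ℕ∞) (Ffun L) (U ×ˢ Set.univ) := hL
  -- fundamental equations in DD form
  have hf2 : ∀ q ∈ (U ×ˢ Set.univ : Set (Esp n k r)), ∀ (i₁ i₂ : Fin (n+r)) (j₁ j₂ : Fin k),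
      DD (dmaj i₁ j₁) (DD (dmaj i₂ j₂) (Ffun L)) q
        + DD (dmaj i₂ j₁) (DD (dmaj i₁ j₂) (Ffun L)) q = 0 := by
    rintro ⟨x', y⟩ ⟨hx', -⟩ i₁ i₂ j₁ j₂
    set m : Fin (n+r) → Fin k → ℝ :=
      fun i => Fin.addCases (motive := fun _ => Fin k → ℝ) (fun A => y.1 A) (fun F => y.2 F) i
      with hm
    have hst : stackF x' m = ((x', y) : Esp n k r) := by
      unfold stackF
      refine Prod.ext rfl (Prod.ext ?_ ?_)
      · funext A; simp [hm]
      · funext F; simp [hm]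
    rw [← hst, ← pdM2_stack hU hLF hx' i₁ i₂ j₁ j₂ m, ← pdM2_stack hU hLF hx' i₂ i₁ j₁ j₂ m]
    exact hfund x' hx' i₁ i₂ j₁ j₂ m
  intro x hx
  intro i₁ i₂ j₁ j₂ m
  have hG : ContDiffOn ℝ (⊤:ℕ∞) (Gfun L) (U ×ˢ Set.univ) := Gfun_smooth L hU hLF
  have hDst : (fun m' : Fin (n+(r+1)) → Fin k → ℝ =>
        Dmix L x (fun A => m' (Fin.castAdd (r + 1) A)) (fun F => m' (Fin.natAdd n F)))
      = fun m' => Gfun L (stackF x m') :=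
    funext fun m' => Dmix_eq_Gfun L hU hLF hx _ _
  rw [hDst]
  have e1 := pdM2_stack hU hG hx i₁ i₂ j₁ j₂ m
  have e2 := pdM2_stack hU hG hx i₂ i₁ j₁ j₂ m
  rw [e1, e2]
  set q : Esp n k (r+1) := stackF x m with hq'
  have hq : q ∈ (U ×ˢ Set.univ : Set (Esp n k (r+1))) := ⟨hx, trivial⟩
  have hρ : piE n k r q ∈ (U ×ˢ Set.univ : Set (Esp n k r)) := piE_mapsTo hq
  rw [DDG L hU hLF hq (dmaj i₁ j₁) (dmaj i₂ j₂), DDG L hU hLF hq (dmaj i₂ j₁) (dmaj i₁ j₂)]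
  rw [← mul_add, ← Finset.sum_add_distrib]
  rw [mul_eq_zero]
  right
  rcases row_cases (k := k) i₁ with ⟨ι₁, hπ₁, hℓ₁⟩ | ⟨hπ₁, hℓ₁⟩ <;>
    rcases row_cases (k := k) i₂ with ⟨ι₂, hπ₂, hℓ₂⟩ | ⟨hπ₂, hℓ₂⟩
  · -- interior, interior
    apply Finset.sum_eq_zero; intro K _
    rw [← Finset.sum_add_distrib]
    apply Finset.sum_eq_zero; intro A _
    rw [hπ₁ j₁, hπ₂ j₂, hπ₂ j₁, hπ₁ j₂, hℓ₁ K j₁, hℓ₂ K j₂, hℓ₂ K j₁, hℓ₁ K j₂]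
    simp only [zero_mul, zero_add, add_zero]
    rw [← mul_add, claimI L hU hLF hf2 hρ ι₁ ι₂ j₁ j₂ A K, mul_zero]
  · -- interior i₁, last i₂
    have key : ∀ K : Fin k, ∀ A : Fin n,
        (ellE n k r K (dmaj i₂ j₂) * DD (piE n k r (dmaj i₁ j₁)) (Hfun L A K) (piE n k r q)
          + (ellE n k r K (dmaj i₁ j₁) * DD (piE n k r (dmaj i₂ j₂)) (Hfun L A K) (piE n k r q)
            + ellE n k r K q * DD (piE n k r (dmaj i₁ j₁))
                (DD (piE n k r (dmaj i₂ j₂)) (Hfun L A K)) (piE n k r q)))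
        + (ellE n k r K (dmaj i₁ j₂) * DD (piE n k r (dmaj i₂ j₁)) (Hfun L A K) (piE n k r q)
          + (ellE n k r K (dmaj i₂ j₁) * DD (piE n k r (dmaj i₁ j₂)) (Hfun L A K) (piE n k r q)
            + ellE n k r K q * DD (piE n k r (dmaj i₂ j₁))
                (DD (piE n k r (dmaj i₁ j₂)) (Hfun L A K)) (piE n k r q)))
        = (if K = j₂ then DD (dmaj ι₁ j₁) (Hfun L A K) (piE n k r q) else 0)
          + (if K = j₁ then DD (dmaj ι₁ j₂) (Hfun L A K) (piE n k r q) else 0) := by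
      intro K A
      rw [hπ₁ j₁, hπ₂ j₂, hπ₂ j₁, hπ₁ j₂, hℓ₁ K j₁, hℓ₂ K j₂, hℓ₂ K j₁, hℓ₁ K j₂,
        DD_zero_dir, DD_zero_dir, DD_of_DD_zero_dir hO _ hρ]
      simp only [zero_mul, mul_zero, zero_add, add_zero, ite_mul, one_mul]
    calc ∑ K, ((∑ A, _) + (∑ A, _)) = ∑ K, ∑ A, ((if K = j₂ then DD (dmaj ι₁ j₁) (Hfun L A K) (piE n k r q) else 0)
          + (if K = j₁ then DD (dmaj ι₁ j₂) (Hfun L A K) (piE n k r q) else 0)) := by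
            apply Finset.sum_congr rfl; intro K _
            rw [← Finset.sum_add_distrib]
            exact Finset.sum_congr rfl fun A _ => key K A
      _ = ∑ A : Fin n, ∑ K, ((if K = j₂ then DD (dmaj ι₁ j₁) (Hfun L A K) (piE n k r q) else 0)
          + (if K = j₁ then DD (dmaj ι₁ j₂) (Hfun L A K) (piE n k r q) else 0)) :=
            Finset.sum_comm
      _ = 0 := by
            apply Finset.sum_eq_zero; intro A _
            rw [Finset.sum_add_distrib, Finset.sum_ite_eq' Finset.univ j₂
                (fun K => DD (dmaj ι₁ j₁) (Hfun L A K) (piE n k r q)),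
              Finset.sum_ite_eq' Finset.univ j₁
                (fun K => DD (dmaj ι₁ j₂) (Hfun L A K) (piE n k r q))]
            simp only [Finset.mem_univ, if_true]
            exact claimII L hU hLF hf2 hρ ι₁ j₁ j₂ A
  · -- last i₁, interior i₂
    have key : ∀ K : Fin k, ∀ A : Fin n,
        (ellE n k r K (dmaj i₂ j₂) * DD (piE n k r (dmaj i₁ j₁)) (Hfun L A K) (piE n k r q)
          + (ellE n k r K (dmaj i₁ j₁) * DD (piE n k r (dmaj i₂ j₂)) (Hfun L A K) (piE n k r q)
            + ellE n k r K q * DD (piE n k r (dmaj i₁ j₁))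
                (DD (piE n k r (dmaj i₂ j₂)) (Hfun L A K)) (piE n k r q)))
        + (ellE n k r K (dmaj i₁ j₂) * DD (piE n k r (dmaj i₂ j₁)) (Hfun L A K) (piE n k r q)
          + (ellE n k r K (dmaj i₂ j₁) * DD (piE n k r (dmaj i₁ j₂)) (Hfun L A K) (piE n k r q)
            + ellE n k r K q * DD (piE n k r (dmaj i₂ j₁))
                (DD (piE n k r (dmaj i₁ j₂)) (Hfun L A K)) (piE n k r q)))
        = (if K = j₁ then DD (dmaj ι₂ j₂) (Hfun L A K) (piE n k r q) else 0)
          + (if K = j₂ then DD (dmaj ι₂ j₁) (Hfun L A K) (piE n k r q) else 0) := by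
      intro K A
      rw [hπ₁ j₁, hπ₂ j₂, hπ₂ j₁, hπ₁ j₂, hℓ₁ K j₁, hℓ₂ K j₂, hℓ₂ K j₁, hℓ₁ K j₂,
        DD_zero_dir, DD_zero_dir, DD_of_DD_zero_dir hO _ hρ]
      simp only [zero_mul, mul_zero, zero_add, add_zero, ite_mul, one_mul]
    calc ∑ K, ((∑ A, _) + (∑ A, _)) = ∑ K, ∑ A, ((if K = j₁ then DD (dmaj ι₂ j₂) (Hfun L A K) (piE n k r q) else 0)
          + (if K = j₂ then DD (dmaj ι₂ j₁) (Hfun L A K) (piE n k r q) else 0)) := by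
            apply Finset.sum_congr rfl; intro K _
            rw [← Finset.sum_add_distrib]
            exact Finset.sum_congr rfl fun A _ => key K A
      _ = ∑ A : Fin n, ∑ K, ((if K = j₁ then DD (dmaj ι₂ j₂) (Hfun L A K) (piE n k r q) else 0)
          + (if K = j₂ then DD (dmaj ι₂ j₁) (Hfun L A K) (piE n k r q) else 0)) :=
            Finset.sum_comm
      _ = 0 := by
            apply Finset.sum_eq_zero; intro A _
            rw [Finset.sum_add_distrib, Finset.sum_ite_eq' Finset.univ j₁
                (fun K => DD (dmaj ι₂ j₂) (Hfun L A K) (piE n k r q)),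
              Finset.sum_ite_eq' Finset.univ j₂
                (fun K => DD (dmaj ι₂ j₁) (Hfun L A K) (piE n k r q))]
            simp only [Finset.mem_univ, if_true]
            rw [add_comm]
            exact claimII L hU hLF hf2 hρ ι₂ j₁ j₂ A
  · -- last, last
    apply Finset.sum_eq_zero; intro K _
    rw [← Finset.sum_add_distrib]
    apply Finset.sum_eq_zero; intro A _
    rw [hπ₁ j₁, hπ₂ j₂, hπ₂ j₁, hπ₁ j₂]
    simp [DD_zero_dir]

end S15

/-- If a smooth mixed Lagrangian `𝓛(x, p, w)` satisfies, for each
`x ∈ U`, the fundamental equations in the entries of the stacked `(n+r) × k` matrix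
(`p` over `w`), then `Δ𝓛` satisfies, for each `x ∈ U`, the fundamental equations in
the entries of the stacked `(n+r+1) × k` matrix (`p` over `ŵ`). -/


theorem statement_15 (n k r : ℕ) (U : Set (Fin n → ℝ)) (hU : IsOpen U)
    (L : (Fin n → ℝ) → (Fin n → Fin k → ℝ) → (Fin r → Fin k → ℝ) → ℝ)
    (hL : ContDiffOn ℝ (⊤ : ℕ∞)
      (fun q : (Fin n → ℝ) × (Fin n → Fin k → ℝ) × (Fin r → Fin k → ℝ) =>
        L q.1 q.2.1 q.2.2)
      (U ×ˢ (Set.univ : Set ((Fin n → Fin k → ℝ) × (Fin r → Fin k → ℝ)))))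
    (hfund : ∀ x ∈ U, FundEqs (fun m : Fin (n + r) → Fin k → ℝ =>
      L x (fun A => m (Fin.castAdd r A)) (fun F => m (Fin.natAdd n F)))) :
    ∀ x ∈ U, FundEqs (fun m : Fin (n + (r + 1)) → Fin k → ℝ =>
      Dmix L x (fun A => m (Fin.castAdd (r + 1) A)) (fun F => m (Fin.natAdd n F))) :=
  S15.statement_15_aux n k r U hU L hL hfund
end
end

section
/- Let U ⊆ ℝⁿ be open and let 𝓛 : U × Matrix(n×k, ℝ) × Matrix(r×k, ℝ) → ℝ be smooth, written 𝓛(x, p, w), satisfying for each fixed x the fundamental equations in the entries of the stacked (n+r)×k matrix (p over w). Define Δ𝓛(x, p, ŵ) := (−1)^r Σ_{K=1}^{k} Σ_{A=1}^{n} w'^K (∂²𝓛/∂x^A∂p_A^K)(x, p, w) for ŵ ∈ Matrix((r+1)×k, ℝ) with first r rows w and last row w', and apply the same construction again to Δ𝓛 (with r replaced by r+1). Then Δ(Δ𝓛) = 0 identically. -/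
open MeasureTheory
open scoped BigOperators

noncomputable section

namespace S16aux

variable {E : Type*} [NormedAddCommGroup E] [NormedSpace ℝ E]

/-- Directional derivative operator. -/
def Dd (v : E) (g : E → ℝ) : E → ℝ := fun q => fderiv ℝ g q v

lemma diffAt {F : Type*} [NormedAddCommGroup F] [NormedSpace ℝ F] {g : E → F} {O : Set E}
    (hg : ContDiffOn ℝ (⊤ : ℕ∞) g O) (hO : IsOpen O)
    {q : E} (hq : q ∈ O) : DifferentiableAt ℝ g q :=
  (hg.contDiffAt (hO.mem_nhds hq)).differentiableAt (by simp)

lemma smooth_dd {g : E → ℝ} {O : Set E} (hg : ContDiffOn ℝ (⊤ : ℕ∞) g O) (hO : IsOpen O)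
    (v : E) : ContDiffOn ℝ (⊤ : ℕ∞) (Dd v g) O := by
  have h1 : ContDiffOn ℝ (⊤ : ℕ∞) (fderiv ℝ g) O :=
    hg.fderiv_of_isOpen hO (by exact_mod_cast le_top)
  exact (ContinuousLinearMap.apply ℝ ℝ v).contDiff.comp_contDiffOn h1

lemma Dd_comm {g : E → ℝ} {O : Set E} (hg : ContDiffOn ℝ (⊤ : ℕ∞) g O) (hO : IsOpen O)
    {q : E} (hq : q ∈ O) (u v : E) : Dd u (Dd v g) q = Dd v (Dd u g) q := by
  have hfd : ContDiffOn ℝ (⊤ : ℕ∞) (fderiv ℝ g) O :=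
    hg.fderiv_of_isOpen hO (by exact_mod_cast le_top)
  have hdiff : DifferentiableAt ℝ (fderiv ℝ g) q := diffAt hfd hO hq
  have hsymm : IsSymmSndFDerivAt ℝ g q :=
    (hg.contDiffAt (hO.mem_nhds hq)).isSymmSndFDerivAt
      (by rw [minSmoothness_of_isRCLikeNormedField]; exact WithTop.coe_le_coe.mpr (le_top : (2 : ℕ∞) ≤ ⊤))
  have h1 : ∀ w z : E, Dd w (Dd z g) q = fderiv ℝ (fderiv ℝ g) q w z := by
    intro w z
    have h2 : fderiv ℝ (fun y => (fderiv ℝ g y) z) q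
        = ((fderiv ℝ g q).comp (fderiv ℝ (fun _ => z) q))
          + (fderiv ℝ (fderiv ℝ g) q).flip z :=
      fderiv_clm_apply hdiff (differentiableAt_const z)
    have h3 : Dd z g = fun y => (fderiv ℝ g y) z := rfl
    show fderiv ℝ (Dd z g) q w = _
    rw [h3, h2]
    simp
  rw [h1, h1, hsymm u v]

lemma Dd_congr {g h : E → ℝ} {O : Set E} (hO : IsOpen O) {q : E} (hq : q ∈ O)
    (he : ∀ x ∈ O, g x = h x) (v : E) : Dd v g q = Dd v h q := by
  have h' : g =ᶠ[nhds q] h := Filter.eventuallyEq_of_mem (hO.mem_nhds hq) he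
  simp only [Dd, h'.fderiv_eq]

lemma Dd_neg {g : E → ℝ} (q v : E) : Dd v (fun x => -g x) q = -Dd v g q := by
  simp [Dd, fderiv_neg]

lemma Dd_const_mul {g : E → ℝ} {q : E} (h : DifferentiableAt ℝ g q) (c : ℝ) (v : E) :
    Dd v (fun x => c * g x) q = c * Dd v g q := by
  simp [Dd, fderiv_const_mul h c]

lemma Dd_sum {ι : Type*} {s : Finset ι} {g : ι → E → ℝ} {q : E}
    (h : ∀ i ∈ s, DifferentiableAt ℝ (g i) q) (v : E) :
    Dd v (fun x => ∑ i ∈ s, g i x) q = ∑ i ∈ s, Dd v (g i) q := by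
  simp [Dd, fderiv_fun_sum h]

/-- Expanding a directional derivative of a finite linear combination. -/
lemma Dd_expand {ι₁ ι₂ : Type*} [Fintype ι₁] [Fintype ι₂] {O : Set E} (hO : IsOpen O)
    {q : E} (hq : q ∈ O) (c : ℝ) (d : ι₁ → ℝ) (g : ι₁ → ι₂ → E → ℝ)
    (hg : ∀ i j, ContDiffOn ℝ (⊤ : ℕ∞) (g i j) O) (v : E) :
    Dd v (fun q' => c * ∑ i, ∑ j, d i * g i j q') q
      = c * ∑ i, ∑ j, d i * Dd v (g i j) q := by
  have hd : ∀ i j, DifferentiableAt ℝ (g i j) q := fun i j => diffAt (hg i j) hO hq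
  have hsum : DifferentiableAt ℝ (fun q' => ∑ i, ∑ j, d i * g i j q') q := by
    apply DifferentiableAt.fun_sum
    intro i _
    apply DifferentiableAt.fun_sum
    intro j _
    exact (hd i j).const_mul _
  rw [Dd_const_mul hsum c v]
  congr 1
  rw [Dd_sum (fun i _ => by
    apply DifferentiableAt.fun_sum
    intro j _
    exact (hd i j).const_mul _) v]
  refine Finset.sum_congr rfl fun i _ => ?_
  rw [Dd_sum (fun j _ => (hd i j).const_mul _) v]
  refine Finset.sum_congr rfl fun j _ => ?_
  exact Dd_const_mul (hd i j) (d i) v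

variable {n k : ℕ}

/-- The coordinate direction in the `x`-slot. -/
def vx (A : Fin n) : (Fin n → ℝ) × (Fin n → Fin k → ℝ) := (Pi.single A 1, 0)

/-- The coordinate direction in the `p`-slot. -/
def vp (A : Fin n) (K : Fin k) : (Fin n → ℝ) × (Fin n → Fin k → ℝ) :=
  (0, fun i j => if i = A ∧ j = K then 1 else 0)

lemma pdM_eq_lineDeriv (g : (Fin n → ℝ) × (Fin n → Fin k → ℝ) → ℝ)
    (x' : Fin n → ℝ) (p : Fin n → Fin k → ℝ) (A : Fin n) (K : Fin k) :
    pdM (fun p' => g (x', p')) A K p = lineDeriv ℝ g (x', p) (vp A K) := by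
  unfold pdM lineDeriv
  congr 1
  funext t
  show g (x', fun i' j' => p i' j' + if i' = A ∧ j' = K then t else 0) = _
  exact congrArg g (Prod.ext (by simp [vp]) (by funext i j; simp [vp, mul_ite]))

lemma pdV_eq_lineDeriv (g : (Fin n → ℝ) × (Fin n → Fin k → ℝ) → ℝ)
    (x : Fin n → ℝ) (p : Fin n → Fin k → ℝ) (A : Fin n) :
    pdV (fun x' => g (x', p)) A x = lineDeriv ℝ g (x, p) (vx A) := by
  unfold pdV lineDeriv
  congr 1
  funext t
  show g (fun i' => x i' + if i' = A then t else 0, p) = _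
  exact congrArg g (Prod.ext (by funext i; simp [vx, Pi.single_apply, mul_ite]) (by simp [vx]))

lemma pdV_congr_on {U : Set (Fin n → ℝ)} (hU : IsOpen U) {x : Fin n → ℝ} (hx : x ∈ U)
    (F : (Fin n → ℝ) → ℝ) (G : (Fin n → ℝ) × (Fin n → Fin k → ℝ) → ℝ)
    (p : Fin n → Fin k → ℝ) (A : Fin n)
    (hFG : ∀ x' ∈ U, F x' = G (x', p)) :
    pdV F A x = lineDeriv ℝ G (x, p) (vx A) := by
  rw [← pdV_eq_lineDeriv]
  unfold pdV
  apply Filter.EventuallyEq.deriv_eq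
  have hc : Continuous (fun t : ℝ => (fun i' => x i' + if i' = A then t else 0)) := by
    apply continuous_pi
    intro i
    by_cases h : i = A <;> simp [h] <;> fun_prop
  have h0 : (fun i' => x i' + if i' = A then (0:ℝ) else 0) = x := by funext i; simp
  have hev : ∀ᶠ t : ℝ in nhds 0, (fun i' => x i' + if i' = A then t else 0) ∈ U :=
    hc.continuousAt (x := 0) |>.preimage_mem_nhds (by rw [h0]; exact hU.mem_nhds hx)
  filter_upwards [hev] with t ht
  exact hFG _ ht

/-- `Dmix` in terms of the directional derivative operator `Dd`. -/
lemma dmix_key {r : ℕ} {U : Set (Fin n → ℝ)} (hU : IsOpen U)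
    (M : (Fin n → ℝ) → (Fin n → Fin k → ℝ) → (Fin r → Fin k → ℝ) → ℝ)
    (what : Fin (r + 1) → Fin k → ℝ) (H : (Fin n → ℝ) × (Fin n → Fin k → ℝ) → ℝ)
    (hH : ContDiffOn ℝ (⊤ : ℕ∞) H (U ×ˢ (Set.univ : Set (Fin n → Fin k → ℝ))))
    (heq : ∀ x' ∈ U, ∀ p', M x' p' (fun F => what (Fin.castSucc F)) = H (x', p'))
    {x : Fin n → ℝ} (hx : x ∈ U) (p : Fin n → Fin k → ℝ) :
    Dmix M x p what
      = (-1 : ℝ) ^ r * ∑ K, ∑ A, what (Fin.last r) K * Dd (vx A) (Dd (vp A K) H) (x, p) := by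
  have hO : IsOpen (U ×ˢ (Set.univ : Set (Fin n → Fin k → ℝ))) := hU.prod isOpen_univ
  unfold Dmix
  congr 1
  refine Finset.sum_congr rfl fun K _ => Finset.sum_congr rfl fun A _ => ?_
  congr 1
  have hH1 : ContDiffOn ℝ (⊤ : ℕ∞) (Dd (vp A K) H)
      (U ×ˢ (Set.univ : Set (Fin n → Fin k → ℝ))) := smooth_dd hH hO _
  have step1 : ∀ x' ∈ U,
      pdM (fun p' => M x' p' (fun F => what (Fin.castSucc F))) A K p
        = Dd (vp A K) H (x', p) := by
    intro x' hx'
    have h1 : (fun p' => M x' p' (fun F => what (Fin.castSucc F))) = fun p' => H (x', p') :=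
      funext fun p' => heq x' hx' p'
    rw [h1, pdM_eq_lineDeriv]
    exact (diffAt hH hO (Set.mk_mem_prod hx' (Set.mem_univ p))).lineDeriv_eq_fderiv
  rw [pdV_congr_on hU hx _ _ p A step1]
  exact (diffAt hH1 hO (Set.mk_mem_prod hx (Set.mem_univ p))).lineDeriv_eq_fderiv

/-- Smoothness of the slice `q ↦ L q.1 q.2 w`. -/
lemma f_smooth {r : ℕ} {U : Set (Fin n → ℝ)}
    {L : (Fin n → ℝ) → (Fin n → Fin k → ℝ) → (Fin r → Fin k → ℝ) → ℝ}
    (hL : ContDiffOn ℝ (⊤ : ℕ∞)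
      (fun q : (Fin n → ℝ) × (Fin n → Fin k → ℝ) × (Fin r → Fin k → ℝ) => L q.1 q.2.1 q.2.2)
      (U ×ˢ (Set.univ : Set ((Fin n → Fin k → ℝ) × (Fin r → Fin k → ℝ)))))
    (w : Fin r → Fin k → ℝ) :
    ContDiffOn ℝ (⊤ : ℕ∞) (fun q : (Fin n → ℝ) × (Fin n → Fin k → ℝ) => L q.1 q.2 w)
      (U ×ˢ (Set.univ : Set (Fin n → Fin k → ℝ))) := by
  have hmap : ContDiff ℝ (⊤ : ℕ∞)
      (fun q : (Fin n → ℝ) × (Fin n → Fin k → ℝ) => (q.1, (q.2, w))) :=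
    contDiff_fst.prodMk (contDiff_snd.prodMk contDiff_const)
  exact hL.comp hmap.contDiffOn (fun q hq => Set.mk_mem_prod hq.1 (Set.mem_univ _))

/-- The fundamental equations for the stacked matrix imply them for the `p`-block. -/
lemma fund_p {r : ℕ} {U : Set (Fin n → ℝ)}
    {L : (Fin n → ℝ) → (Fin n → Fin k → ℝ) → (Fin r → Fin k → ℝ) → ℝ}
    (hfund : ∀ x ∈ U, FundEqs (fun m : Fin (n + r) → Fin k → ℝ =>
      L x (fun A => m (Fin.castAdd r A)) (fun F => m (Fin.natAdd n F))))
    {x : Fin n → ℝ} (hx : x ∈ U) (w : Fin r → Fin k → ℝ)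
    (p : Fin n → Fin k → ℝ) (A B : Fin n) (K J : Fin k) :
    pdM (fun p' => pdM (fun p'' => L x p'' w) B J p') A K p
      + pdM (fun p' => pdM (fun p'' => L x p'' w) A J p') B K p = 0 := by
  have key : ∀ (B' : Fin n) (J' : Fin k) (p' : Fin n → Fin k → ℝ),
      pdM (fun m : Fin (n + r) → Fin k → ℝ =>
          L x (fun A' => m (Fin.castAdd r A')) (fun F => m (Fin.natAdd n F)))
        (Fin.castAdd r B') J' (Fin.append p' w)
      = pdM (fun p'' => L x p'' w) B' J' p' := by
    intro B' J' p'
    unfold pdM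
    congr 1
    funext t
    have h1 : (fun A' => (fun i' j' => Fin.append p' w i' j'
          + if i' = Fin.castAdd r B' ∧ j' = J' then t else 0) (Fin.castAdd r A'))
        = fun A' j' => p' A' j' + if A' = B' ∧ j' = J' then t else 0 := by
      funext a j
      have : (Fin.castAdd r a = Fin.castAdd r B') ↔ (a = B') :=
        (Fin.castAdd_injective n r).eq_iff
      simp [Fin.append_left, this]
    have h2 : (fun F => (fun i' j' => Fin.append p' w i' j'
          + if i' = Fin.castAdd r B' ∧ j' = J' then t else 0) (Fin.natAdd n F)) = w := by
      funext F j
      have hne : ¬(Fin.natAdd n F = Fin.castAdd r B' ∧ j = J') := by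
        rintro ⟨h1', -⟩
        have h2' := congrArg Fin.val h1'
        simp [Fin.coe_natAdd, Fin.coe_castAdd] at h2'
        omega
      simp [Fin.append_right, hne]
    show L x _ _ = L x _ w
    rw [h1, h2]
  have key2 : ∀ (A' B' : Fin n) (K' J' : Fin k),
      pdM (fun m' => pdM (fun m : Fin (n + r) → Fin k → ℝ =>
          L x (fun A'' => m (Fin.castAdd r A'')) (fun F => m (Fin.natAdd n F)))
        (Fin.castAdd r B') J' m') (Fin.castAdd r A') K' (Fin.append p w)
      = pdM (fun p' => pdM (fun p'' => L x p'' w) B' J' p') A' K' p := by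
    intro A' B' K' J'
    conv_lhs => rw [pdM]
    conv_rhs => rw [pdM]
    congr 1
    funext t
    have hm : (fun i' j' => Fin.append p w i' j'
          + if i' = Fin.castAdd r A' ∧ j' = K' then t else 0)
        = Fin.append (fun i j => p i j + if i = A' ∧ j = K' then t else 0) w := by
      funext i
      refine Fin.addCases (fun i0 => ?_) (fun i0 => ?_) i
      · funext j
        have : (Fin.castAdd r i0 = Fin.castAdd r A') ↔ (i0 = A') :=
          (Fin.castAdd_injective n r).eq_iff
        simp [Fin.append_left, this]
      · funext j
        have hne : ¬(Fin.natAdd n i0 = Fin.castAdd r A' ∧ j = K') := by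
          rintro ⟨h1', -⟩
          have h2' := congrArg Fin.val h1'
          simp [Fin.coe_natAdd, Fin.coe_castAdd] at h2'
          omega
        simp [Fin.append_right, hne]
    rw [hm, key B' J']
  have H := hfund x hx (Fin.castAdd r A) (Fin.castAdd r B) K J (Fin.append p w)
  rw [key2 A B K J, key2 B A K J] at H
  exact H

/-- The fundamental equations in `Dd` form. -/
lemma fund_dd {r : ℕ} {U : Set (Fin n → ℝ)} (hU : IsOpen U)
    {L : (Fin n → ℝ) → (Fin n → Fin k → ℝ) → (Fin r → Fin k → ℝ) → ℝ}
    (hL : ContDiffOn ℝ (⊤ : ℕ∞)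
      (fun q : (Fin n → ℝ) × (Fin n → Fin k → ℝ) × (Fin r → Fin k → ℝ) => L q.1 q.2.1 q.2.2)
      (U ×ˢ (Set.univ : Set ((Fin n → Fin k → ℝ) × (Fin r → Fin k → ℝ)))))
    (hfund : ∀ x ∈ U, FundEqs (fun m : Fin (n + r) → Fin k → ℝ =>
      L x (fun A => m (Fin.castAdd r A)) (fun F => m (Fin.natAdd n F))))
    (w : Fin r → Fin k → ℝ) {x : Fin n → ℝ} (hx : x ∈ U) (p : Fin n → Fin k → ℝ)
    (A B : Fin n) (K J : Fin k) :
    Dd (vp A K) (Dd (vp B J) (fun q : (Fin n → ℝ) × (Fin n → Fin k → ℝ) => L q.1 q.2 w)) (x, p)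
      + Dd (vp B K) (Dd (vp A J)
          (fun q : (Fin n → ℝ) × (Fin n → Fin k → ℝ) => L q.1 q.2 w)) (x, p) = 0 := by
  have hO : IsOpen (U ×ˢ (Set.univ : Set (Fin n → Fin k → ℝ))) := hU.prod isOpen_univ
  have hf : ContDiffOn ℝ (⊤ : ℕ∞)
      (fun q : (Fin n → ℝ) × (Fin n → Fin k → ℝ) => L q.1 q.2 w)
      (U ×ˢ (Set.univ : Set (Fin n → Fin k → ℝ))) := f_smooth hL w
  have step : ∀ (B' : Fin n) (J' : Fin k) (p' : Fin n → Fin k → ℝ),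
      pdM (fun p'' => L x p'' w) B' J' p'
        = Dd (vp B' J') (fun q : (Fin n → ℝ) × (Fin n → Fin k → ℝ) => L q.1 q.2 w) (x, p') := by
    intro B' J' p'
    exact (pdM_eq_lineDeriv (fun q : (Fin n → ℝ) × (Fin n → Fin k → ℝ) => L q.1 q.2 w)
      x p' B' J').trans
      (diffAt hf hO (Set.mk_mem_prod hx (Set.mem_univ p'))).lineDeriv_eq_fderiv
  have step2 : ∀ (A' B' : Fin n) (K' J' : Fin k),
      pdM (fun p' => pdM (fun p'' => L x p'' w) B' J' p') A' K' p
        = Dd (vp A' K') (Dd (vp B' J')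
            (fun q : (Fin n → ℝ) × (Fin n → Fin k → ℝ) => L q.1 q.2 w)) (x, p) := by
    intro A' B' K' J'
    have h1 : (fun p' => pdM (fun p'' => L x p'' w) B' J' p')
        = fun p' => Dd (vp B' J')
            (fun q : (Fin n → ℝ) × (Fin n → Fin k → ℝ) => L q.1 q.2 w) (x, p') :=
      funext fun p' => step B' J' p'
    rw [h1, pdM_eq_lineDeriv]
    exact (diffAt (smooth_dd hf hO _) hO
      (Set.mk_mem_prod hx (Set.mem_univ p))).lineDeriv_eq_fderiv
  rw [← step2 A B K J, ← step2 B A K J]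
  exact fund_p hfund hx w p A B K J

end S16aux

open S16aux in

/-- If a smooth mixed Lagrangian `𝓛(x, p, w)` satisfies, for each
`x ∈ U`, the fundamental equations in the entries of the stacked `(n+r) × k` matrix
(`p` over `w`), then `Δ(Δ𝓛) = 0` identically. -/
theorem statement_16 (n k r : ℕ) (U : Set (Fin n → ℝ)) (hU : IsOpen U)
    (L : (Fin n → ℝ) → (Fin n → Fin k → ℝ) → (Fin r → Fin k → ℝ) → ℝ)
    (hL : ContDiffOn ℝ (⊤ : ℕ∞)
      (fun q : (Fin n → ℝ) × (Fin n → Fin k → ℝ) × (Fin r → Fin k → ℝ) =>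
        L q.1 q.2.1 q.2.2)
      (U ×ˢ (Set.univ : Set ((Fin n → Fin k → ℝ) × (Fin r → Fin k → ℝ)))))
    (hfund : ∀ x ∈ U, FundEqs (fun m : Fin (n + r) → Fin k → ℝ =>
      L x (fun A => m (Fin.castAdd r A)) (fun F => m (Fin.natAdd n F)))) :
    ∀ x ∈ U, ∀ (p : Fin n → Fin k → ℝ) (W : Fin (r + 2) → Fin k → ℝ),
      Dmix (Dmix L) x p W = 0 := by
  classical
  intro x hx p W
  have hO : IsOpen (U ×ˢ (Set.univ : Set (Fin n → Fin k → ℝ))) := hU.prod isOpen_univ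
  have hxp : (x, p) ∈ U ×ˢ (Set.univ : Set (Fin n → Fin k → ℝ)) :=
    Set.mk_mem_prod hx (Set.mem_univ p)
  set w0 : Fin r → Fin k → ℝ := fun F => W (Fin.castSucc (Fin.castSucc F)) with hw0
  set f : (Fin n → ℝ) × (Fin n → Fin k → ℝ) → ℝ := fun q => L q.1 q.2 w0 with hfdef
  have hf : ContDiffOn ℝ (⊤ : ℕ∞) f (U ×ˢ (Set.univ : Set (Fin n → Fin k → ℝ))) :=
    f_smooth hL w0
  set wh : Fin (r + 1) → Fin k → ℝ := fun F => W (Fin.castSucc F) with hwh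
  have hg : ∀ (B : Fin n) (J : Fin k),
      ContDiffOn ℝ (⊤ : ℕ∞) (Dd (vx B) (Dd (vp B J) f))
        (U ×ˢ (Set.univ : Set (Fin n → Fin k → ℝ))) :=
    fun B J => smooth_dd (smooth_dd hf hO _) hO _
  set H1 : (Fin n → ℝ) × (Fin n → Fin k → ℝ) → ℝ := fun q =>
    (-1 : ℝ) ^ r * ∑ J, ∑ B, wh (Fin.last r) J * Dd (vx B) (Dd (vp B J) f) q with hH1def
  have hH1 : ContDiffOn ℝ (⊤ : ℕ∞) H1 (U ×ˢ (Set.univ : Set (Fin n → Fin k → ℝ))) := by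
    apply ContDiffOn.mul contDiffOn_const
    apply ContDiffOn.sum; intro J _
    apply ContDiffOn.sum; intro B _
    exact ContDiffOn.mul contDiffOn_const (hg B J)
  have layer1 : ∀ x' ∈ U, ∀ p', Dmix L x' p' wh = H1 (x', p') := by
    intro x' hx' p'
    exact dmix_key hU L wh f hf (fun _ _ _ => rfl) hx' p'
  have key := dmix_key hU (Dmix L) W H1 hH1 (fun x' hx' p' => layer1 x' hx' p') hx p
  -- expansion of each term
  have hexp : ∀ (A : Fin n) (K : Fin k),
      Dd (vx A) (Dd (vp A K) H1) (x, p)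
        = (-1 : ℝ) ^ r * ∑ J, ∑ B, wh (Fin.last r) J
            * Dd (vx A) (Dd (vp A K) (Dd (vx B) (Dd (vp B J) f))) (x, p) := by
    intro A K
    have hin : ∀ q ∈ U ×ˢ (Set.univ : Set (Fin n → Fin k → ℝ)),
        Dd (vp A K) H1 q = (fun q' => (-1 : ℝ) ^ r * ∑ J, ∑ B, wh (Fin.last r) J
          * Dd (vp A K) (Dd (vx B) (Dd (vp B J) f)) q') q := by
      intro q hq
      rw [hH1def]
      exact Dd_expand hO hq ((-1 : ℝ) ^ r) (fun J => wh (Fin.last r) J)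
        (fun J B => Dd (vx B) (Dd (vp B J) f)) (fun J B => hg B J) (vp A K)
    rw [Dd_congr hO hxp hin (vx A)]
    exact Dd_expand hO hxp ((-1 : ℝ) ^ r) (fun J => wh (Fin.last r) J)
      (fun J B => Dd (vp A K) (Dd (vx B) (Dd (vp B J) f)))
      (fun J B => smooth_dd (hg B J) hO _) (vx A)
  -- the fundamental equations, pointwise on the open set
  have fundneg : ∀ (A B : Fin n) (K J : Fin k),
      ∀ q ∈ U ×ˢ (Set.univ : Set (Fin n → Fin k → ℝ)),
      Dd (vp A K) (Dd (vp B J) f) q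
        = (fun q' => -(Dd (vp B K) (Dd (vp A J) f) q')) q := by
    intro A B K J q hq
    have h := fund_dd hU hL hfund w0 hq.1 q.2 A B K J
    have h' : Dd (vp A K) (Dd (vp B J) f) q + Dd (vp B K) (Dd (vp A J) f) q = 0 := h
    simp only []
    linarith
  -- the vanishing of the inner double sum
  have hT : ∀ (K J : Fin k),
      (∑ A, ∑ B, Dd (vx A) (Dd (vp A K) (Dd (vx B) (Dd (vp B J) f))) (x, p)) = 0 := by
    intro K J
    -- first commute the middle two derivatives
    have hswap : ∀ (A B : Fin n),
        Dd (vx A) (Dd (vp A K) (Dd (vx B) (Dd (vp B J) f))) (x, p)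
          = Dd (vx A) (Dd (vx B) (Dd (vp A K) (Dd (vp B J) f))) (x, p) := by
      intro A B
      exact Dd_congr hO hxp
        (fun q hq => Dd_comm (smooth_dd hf hO (vp B J)) hO hq (vp A K) (vx B)) (vx A)
    have hs2 : ∀ (A B : Fin n),
        Dd (vx A) (Dd (vx B) (Dd (vp A K) (Dd (vp B J) f))) (x, p)
          = -(Dd (vx B) (Dd (vx A) (Dd (vp B K) (Dd (vp A J) f))) (x, p)) := by
      intro A B
      have h1 : ∀ q ∈ U ×ˢ (Set.univ : Set (Fin n → Fin k → ℝ)),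
          Dd (vx B) (Dd (vp A K) (Dd (vp B J) f)) q
            = (fun q' => -(Dd (vx B) (Dd (vp B K) (Dd (vp A J) f)) q')) q := by
        intro q hq
        rw [Dd_congr hO hq (fundneg A B K J) (vx B)]
        exact Dd_neg q (vx B)
      rw [Dd_congr hO hxp h1 (vx A), Dd_neg]
      congr 1
      exact Dd_comm (smooth_dd (smooth_dd hf hO _) hO _) hO hxp (vx A) (vx B)
    have hSS : (∑ A, ∑ B, Dd (vx A) (Dd (vx B) (Dd (vp A K) (Dd (vp B J) f))) (x, p))
        = -(∑ A, ∑ B, Dd (vx A) (Dd (vx B) (Dd (vp A K) (Dd (vp B J) f))) (x, p)) := by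
      calc (∑ A, ∑ B, Dd (vx A) (Dd (vx B) (Dd (vp A K) (Dd (vp B J) f))) (x, p))
          = ∑ A, ∑ B, -(Dd (vx B) (Dd (vx A) (Dd (vp B K) (Dd (vp A J) f))) (x, p)) :=
            Finset.sum_congr rfl fun A _ => Finset.sum_congr rfl fun B _ => hs2 A B
        _ = -(∑ A, ∑ B, Dd (vx B) (Dd (vx A) (Dd (vp B K) (Dd (vp A J) f))) (x, p)) := by
            simp
        _ = -(∑ B, ∑ A, Dd (vx B) (Dd (vx A) (Dd (vp B K) (Dd (vp A J) f))) (x, p)) := by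
            rw [Finset.sum_comm]
      -- the last expression is `-(original)` up to renaming of the bound variables
    have hS0 : (∑ A, ∑ B, Dd (vx A) (Dd (vx B) (Dd (vp A K) (Dd (vp B J) f))) (x, p)) = 0 := by
      linarith
    calc (∑ A, ∑ B, Dd (vx A) (Dd (vp A K) (Dd (vx B) (Dd (vp B J) f))) (x, p))
        = ∑ A, ∑ B, Dd (vx A) (Dd (vx B) (Dd (vp A K) (Dd (vp B J) f))) (x, p) :=
          Finset.sum_congr rfl fun A _ => Finset.sum_congr rfl fun B _ => hswap A B
      _ = 0 := hS0
  -- final algebra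
  rw [key]
  have hzero : (∑ K, ∑ A, W (Fin.last (r + 1)) K * Dd (vx A) (Dd (vp A K) H1) (x, p)) = 0 := by
    have h1 : (∑ K, ∑ A, W (Fin.last (r + 1)) K * Dd (vx A) (Dd (vp A K) H1) (x, p))
        = ∑ K, ∑ A, ∑ J, ∑ B, W (Fin.last (r + 1)) K * ((-1 : ℝ) ^ r * (wh (Fin.last r) J
            * Dd (vx A) (Dd (vp A K) (Dd (vx B) (Dd (vp B J) f))) (x, p))) := by
      refine Finset.sum_congr rfl fun K _ => Finset.sum_congr rfl fun A _ => ?_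
      rw [hexp A K]
      simp only [Finset.mul_sum]
    rw [h1]
    apply Finset.sum_eq_zero
    intro K _
    rw [Finset.sum_comm]
    apply Finset.sum_eq_zero
    intro J _
    calc (∑ A, ∑ B, W (Fin.last (r + 1)) K * ((-1 : ℝ) ^ r * (wh (Fin.last r) J
            * Dd (vx A) (Dd (vp A K) (Dd (vx B) (Dd (vp B J) f))) (x, p))))
        = (W (Fin.last (r + 1)) K * ((-1 : ℝ) ^ r * wh (Fin.last r) J))
            * ∑ A, ∑ B, Dd (vx A) (Dd (vp A K) (Dd (vx B) (Dd (vp B J) f))) (x, p) := by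
          rw [Finset.mul_sum]
          refine Finset.sum_congr rfl fun A _ => ?_
          rw [Finset.mul_sum]
          refine Finset.sum_congr rfl fun B _ => ?_
          ring
      _ = 0 := by rw [hT K J, mul_zero]
  rw [hzero, mul_zero]
end
end
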